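/- arXiv:1708.02854 — 9 statements merged into one kernel-verified Lean document; each statement's English description precedes it below -/
import Mathlib

section
/- Let β ∈ (0,1], and let p, q be real numbers with 1 ≤ p ≤ q < ∞. There exists a constant C > 0, depending only on β, p and q, such that for every R > 0 and every function f : [0,1] → ℝ belonging to the Hölder ball C^β(R), with f not identically zero, one has ‖f‖_q ≤ C · ‖f‖_p · max(1, R/‖f‖_p)^{(1/p − 1/q)/(β + 1/p)}. -/
open MeasureTheory

theorem mycont (β R : ℝ) (hβ0 : 0 < β) (hR : 0 < R) (f : ℝ → ℝ)
    (hf : ∀ x ∈ Set.Icc (0:ℝ) 1, ∀ y ∈ Set.Icc (0:ℝ) 1, |f x - f y| ≤ R * |x - y| ^ β) :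
    ContinuousOn f (Set.Icc 0 1) := by
  intro x hx
  rw [Metric.continuousWithinAt_iff]
  intro ε hε
  refine ⟨(ε/(2*R)) ^ (1/β), Real.rpow_pos_of_pos (by positivity) _, ?_⟩
  intro y hy hd
  have h1 : |f y - f x| ≤ R * |y - x| ^ β := hf y hy x hx
  have h2 : |y - x| ^ β ≤ ((ε/(2*R)) ^ (1/β)) ^ β :=
    Real.rpow_le_rpow (abs_nonneg _) hd.le hβ0.le
  have h3 : ((ε/(2*R):ℝ) ^ (1/β)) ^ β = ε/(2*R) := by
    rw [← Real.rpow_mul (by positivity), one_div, inv_mul_cancel₀ hβ0.ne', Real.rpow_one]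
  rw [Real.dist_eq]
  calc |f y - f x| ≤ R * |y - x| ^ β := h1
    _ ≤ R * (ε/(2*R)) := by rw [← h3]; exact mul_le_mul_of_nonneg_left h2 hR.le
    _ = ε/2 := by field_simp
    _ < ε := by linarith

theorem mylower (p c : ℝ) (hp : 1 ≤ p) (hc : 0 ≤ c) (f : ℝ → ℝ)
    (hcont : ContinuousOn f (Set.Icc 0 1)) (x0 : ℝ) (hx0 : x0 ∈ Set.Icc (0:ℝ) 1)
    (h : ℝ) (h0 : 0 < h) (h12 : h ≤ 1/2)
    (hlow : ∀ x ∈ Set.Icc (0:ℝ) 1, |x - x0| ≤ h → c ≤ |f x|) :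
    c ^ p * h ≤ ∫ x in Set.Icc (0:ℝ) 1, |f x| ^ p := by
  have hp0 : (0:ℝ) ≤ p := by linarith
  obtain ⟨a, b, hab, hsub, hnear⟩ : ∃ a b : ℝ, b - a = h ∧ Set.Icc a b ⊆ Set.Icc 0 1 ∧
      ∀ x ∈ Set.Icc a b, |x - x0| ≤ h := by
    rcases le_or_gt x0 (1/2) with hc1 | hc1
    · refine ⟨x0, x0 + h, by ring, ?_, ?_⟩
      · intro x hx
        exact ⟨le_trans hx0.1 hx.1, le_trans hx.2 (by linarith)⟩
      · intro x hx
        rw [abs_le]; constructor <;> [linarith [hx.1]; linarith [hx.2]]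
    · refine ⟨x0 - h, x0, by ring, ?_, ?_⟩
      · intro x hx
        exact ⟨le_trans (by linarith) hx.1, le_trans hx.2 hx0.2⟩
      · intro x hx
        rw [abs_le]; constructor <;> [linarith [hx.1]; linarith [hx.2]]
  have hint : IntegrableOn (fun x => |f x| ^ p) (Set.Icc (0:ℝ) 1) :=
    (hcont.abs.rpow_const (fun x _ => Or.inr hp0)).integrableOn_Icc
  calc c ^ p * h = ∫ _ in Set.Icc a b, c ^ p := by
        rw [setIntegral_const, measureReal_def, Real.volume_Icc, ENNReal.toReal_ofReal (by linarith),
          hab, smul_eq_mul, mul_comm]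
    _ ≤ ∫ x in Set.Icc a b, |f x| ^ p := by
        refine setIntegral_mono_on (integrableOn_const ?_) (hint.mono_set hsub)
          measurableSet_Icc (fun x hx => Real.rpow_le_rpow hc (hlow x (hsub hx) (hnear x hx)) hp0)
        rw [Real.volume_Icc]; exact ENNReal.ofReal_ne_top
    _ ≤ ∫ x in Set.Icc (0:ℝ) 1, |f x| ^ p := by
        refine setIntegral_mono_set hint ?_ (HasSubset.Subset.eventuallyLE hsub)
        filter_upwards with x using Real.rpow_nonneg (abs_nonneg _) _

theorem myupper (p q M : ℝ) (hp : 1 ≤ p) (hpq : p ≤ q) (hM : 0 ≤ M) (f : ℝ → ℝ)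
    (hcont : ContinuousOn f (Set.Icc 0 1)) (hbd : ∀ x ∈ Set.Icc (0:ℝ) 1, |f x| ≤ M) :
    ∫ x in Set.Icc (0:ℝ) 1, |f x| ^ q ≤ M ^ (q - p) * ∫ x in Set.Icc (0:ℝ) 1, |f x| ^ p := by
  have hq0 : (0:ℝ) < q := by linarith
  have hintp : IntegrableOn (fun x => |f x| ^ p) (Set.Icc (0:ℝ) 1) :=
    (hcont.abs.rpow_const (fun x _ => Or.inr (by linarith))).integrableOn_Icc
  have hintq : IntegrableOn (fun x => |f x| ^ q) (Set.Icc (0:ℝ) 1) :=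
    (hcont.abs.rpow_const (fun x _ => Or.inr (by linarith))).integrableOn_Icc
  rw [← integral_const_mul]
  refine setIntegral_mono_on hintq (hintp.const_mul _) measurableSet_Icc (fun x hx => ?_)
  have : |f x| ^ q = |f x| ^ (q - p) * |f x| ^ p := by
    rw [← Real.rpow_add' (abs_nonneg _) (by rw [sub_add_cancel]; exact hq0.ne')]
    ring_nf
  rw [this]
  exact mul_le_mul_of_nonneg_right
    (Real.rpow_le_rpow (abs_nonneg _) (hbd x hx) (by linarith))
    (Real.rpow_nonneg (abs_nonneg _) _)

/-- Interpolation inequality between L^p and L^q norms on Hölder balls. -/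
theorem lp_lq_interpolation_holder (β p q : ℝ) (hβ0 : 0 < β) (hβ1 : β ≤ 1)
    (hp : 1 ≤ p) (hpq : p ≤ q) :
    ∃ C : ℝ, 0 < C ∧ ∀ R : ℝ, 0 < R → ∀ f : ℝ → ℝ,
      (∀ x ∈ Set.Icc (0:ℝ) 1, ∀ y ∈ Set.Icc (0:ℝ) 1, |f x - f y| ≤ R * |x - y| ^ β) →
      (∃ x ∈ Set.Icc (0:ℝ) 1, f x ≠ 0) →
      (∫ x in Set.Icc (0:ℝ) 1, |f x| ^ q) ^ (1/q) ≤
        C * (∫ x in Set.Icc (0:ℝ) 1, |f x| ^ p) ^ (1/p) *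
          (max 1 (R / (∫ x in Set.Icc (0:ℝ) 1, |f x| ^ p) ^ (1/p)))
            ^ ((1/p - 1/q) / (β + 1/p)) := by
  have hp0 : (0:ℝ) < p := by linarith
  have hq0 : (0:ℝ) < q := by linarith
  refine ⟨4, by norm_num, ?_⟩
  intro R hR f hf hfz
  have hcont : ContinuousOn f (Set.Icc 0 1) := mycont β R hβ0 hR f hf
  obtain ⟨x0, hx0, hmax⟩ :=
    isCompact_Icc.exists_isMaxOn (Set.nonempty_Icc.2 zero_le_one) hcont.abs
  set M := |f x0| with hMdef
  have hM0 : 0 < M := by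
    obtain ⟨z, hz, hzne⟩ := hfz
    exact lt_of_lt_of_le (abs_pos.2 hzne) (hmax hz)
  set J := ∫ x in Set.Icc (0:ℝ) 1, |f x| ^ p with hJdef
  set A := J ^ (1/p) with hAdef
  set θ := (1/p - 1/q) / (β + 1/p) with hθdef
  have hθ0 : 0 ≤ θ := by
    apply div_nonneg _ (by positivity)
    have := one_div_le_one_div_of_le hp0 hpq
    linarith
  -- the small interval radius
  set h : ℝ := min (1/2) ((M/(2*R)) ^ (1/β)) with hhdef
  have hh0 : 0 < h := lt_min (by norm_num) (Real.rpow_pos_of_pos (by positivity) _)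
  have hh12 : h ≤ 1/2 := min_le_left _ _
  have hlow : ∀ x ∈ Set.Icc (0:ℝ) 1, |x - x0| ≤ h → M/2 ≤ |f x| := by
    intro x hx hxd
    have h1 : |f x0 - f x| ≤ R * |x0 - x| ^ β := hf x0 hx0 x hx
    have h2 : |x0 - x| ^ β ≤ ((M/(2*R)) ^ (1/β)) ^ β := by
      apply Real.rpow_le_rpow (abs_nonneg _) _ hβ0.le
      rw [abs_sub_comm]
      exact le_trans hxd (min_le_right _ _)
    have h3 : ((M/(2*R):ℝ) ^ (1/β)) ^ β = M/(2*R) := by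
      rw [← Real.rpow_mul (by positivity), one_div, inv_mul_cancel₀ hβ0.ne', Real.rpow_one]
    have h4 : R * |x0 - x| ^ β ≤ M/2 := by
      rw [h3] at h2
      calc R * |x0 - x| ^ β ≤ R * (M/(2*R)) := mul_le_mul_of_nonneg_left h2 hR.le
        _ = M/2 := by field_simp
    have h5 : |f x0| - |f x| ≤ |f x0 - f x| := abs_sub_abs_le_abs_sub _ _
    have := le_trans h1 h4
    rw [← hMdef] at h5
    linarith
  have hlower : (M/2) ^ p * h ≤ J :=
    mylower p (M/2) hp (by positivity) f hcont x0 hx0 h hh0 hh12 hlow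
  have hJpos : 0 < J := lt_of_lt_of_le (by positivity) hlower
  have hA0 : 0 < A := Real.rpow_pos_of_pos hJpos _
  have hApJ : A ^ p = J := by
    rw [hAdef, ← Real.rpow_mul hJpos.le, one_div, inv_mul_cancel₀ hp0.ne', Real.rpow_one]
  have hmax1 : (1:ℝ) ≤ (max 1 (R / A)) ^ θ := Real.one_le_rpow (le_max_left _ _) hθ0
  -- upper bound on L^q in terms of M and A
  have hintq_nonneg : 0 ≤ ∫ x in Set.Icc (0:ℝ) 1, |f x| ^ q :=
    setIntegral_nonneg measurableSet_Icc (fun x _ => Real.rpow_nonneg (abs_nonneg _) _)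
  have hkey : (∫ x in Set.Icc (0:ℝ) 1, |f x| ^ q) ^ (1/q) ≤ M ^ (1 - p/q) * A ^ (p/q) := by
    have h1 := Real.rpow_le_rpow hintq_nonneg
      (myupper p q M hp hpq hM0.le f hcont (fun x hx => hmax hx)) (by positivity : (0:ℝ) ≤ 1/q)
    calc (∫ x in Set.Icc (0:ℝ) 1, |f x| ^ q) ^ (1/q) ≤ (M ^ (q-p) * J) ^ (1/q) := h1
      _ = M ^ (1 - p/q) * A ^ (p/q) := by
          rw [← hApJ, Real.mul_rpow (Real.rpow_nonneg hM0.le _) (Real.rpow_nonneg hA0.le _),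
            ← Real.rpow_mul hM0.le, ← Real.rpow_mul hA0.le, mul_one_div, sub_div,
            div_self hq0.ne', mul_one_div]
  -- final form helpers
  have hpq' : 0 ≤ 1 - p/q := by
    have : p/q ≤ 1 := (div_le_one hq0).2 hpq
    linarith
  have hpq'' : 1 - p/q ≤ 1 := sub_le_self _ (by positivity)
  rcases le_or_gt (1/2 : ℝ) ((M/(2*R)) ^ (1/β)) with hcase | hcase
  · -- Case 1 : h = 1/2, M ≤ 4A
    have hh : h = 1/2 := min_eq_left hcase
    rw [hh] at hlower
    have hM4 : M ≤ 4 * A := by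
      have h1 : (M/4) ^ p ≤ A ^ p := by
        calc (M/4) ^ p = (M/2) ^ p * (1/2 : ℝ) ^ p := by
              rw [← Real.mul_rpow (by positivity) (by norm_num)]
              congr 1; ring
          _ ≤ (M/2) ^ p * (1/2) := by
              refine mul_le_mul_of_nonneg_left ?_ (by positivity)
              calc ((1:ℝ)/2) ^ p ≤ (1/2 : ℝ) ^ (1:ℝ) :=
                    Real.rpow_le_rpow_of_exponent_ge (by norm_num) (by norm_num) hp
                _ = 1/2 := Real.rpow_one _
          _ ≤ A ^ p := by rw [hApJ]; exact hlower
      have := (Real.rpow_le_rpow_iff (by positivity) hA0.le hp0).1 h1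
      linarith
    calc (∫ x in Set.Icc (0:ℝ) 1, |f x| ^ q) ^ (1/q) ≤ M ^ (1 - p/q) * A ^ (p/q) := hkey
      _ ≤ (4*A) ^ (1 - p/q) * A ^ (p/q) := by
          exact mul_le_mul_of_nonneg_right
            (Real.rpow_le_rpow hM0.le hM4 hpq') (Real.rpow_nonneg hA0.le _)
      _ = 4 ^ (1 - p/q) * A := by
          rw [Real.mul_rpow (by norm_num) hA0.le, mul_assoc,
            ← Real.rpow_add hA0]
          norm_num
      _ ≤ 4 * A := by
          refine mul_le_mul_of_nonneg_right ?_ hA0.le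
          calc (4:ℝ) ^ (1 - p/q) ≤ (4:ℝ) ^ (1:ℝ) :=
                Real.rpow_le_rpow_of_exponent_le (by norm_num) hpq''
            _ = 4 := Real.rpow_one _
      _ ≤ 4 * A * (max 1 (R/A)) ^ θ := by
          nlinarith [hmax1, hA0]
  · -- Case 2 : h = (M/(2R))^(1/β)
    have hh : h = (M/(2*R)) ^ (1/β) := min_eq_right hcase.le
    rw [hh] at hlower
    set s : ℝ := p + 1/β with hsdef
    have hs0 : 0 < s := by positivity
    have hβp : (0:ℝ) < β*p + 1 := by positivity
    set t : ℝ := 1/(β*p+1) with htdef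
    have ht0 : 0 < t := by positivity
    have ht1 : t ≤ 1 := by
      rw [htdef, div_le_one hβp]; nlinarith
    have hMs : M ^ s ≤ 2 ^ s * R ^ (1/β) * A ^ p := by
      have heq : M ^ s = ((M/2) ^ p * (M/(2*R)) ^ (1/β)) * (2 ^ s * R ^ (1/β)) := by
        rw [Real.div_rpow hM0.le (by norm_num), Real.div_rpow hM0.le (by positivity),
          Real.mul_rpow (by norm_num) hR.le, hsdef, Real.rpow_add hM0,
          Real.rpow_add (by norm_num : (0:ℝ) < 2)]
        have hRb : (0:ℝ) < R ^ (1/β) := Real.rpow_pos_of_pos hR _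
        have h2b : (0:ℝ) < (2:ℝ) ^ (1/β) := Real.rpow_pos_of_pos (by norm_num) _
        have h2p : (0:ℝ) < (2:ℝ) ^ p := Real.rpow_pos_of_pos (by norm_num) _
        field_simp
      have hlow2 : (M/2) ^ p * (M/(2*R)) ^ (1/β) ≤ A ^ p := by
        rw [hApJ]; exact hlower
      calc M ^ s = ((M/2) ^ p * (M/(2*R)) ^ (1/β)) * (2 ^ s * R ^ (1/β)) := heq
        _ ≤ A ^ p * (2 ^ s * R ^ (1/β)) := mul_le_mul_of_nonneg_right hlow2 (by positivity)
        _ = 2 ^ s * R ^ (1/β) * A ^ p := mul_comm _ _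
    have hd1 : β + 1/p ≠ 0 := by positivity
    have ht_s : (1/β) * (1/s) = t := by
      rw [htdef, hsdef]; field_simp
    have hp_s : p * (1/s) = 1 - t := by
      rw [htdef, hsdef]; field_simp; ring
    have hM2 : M ≤ 2 * R ^ t * A ^ (1 - t) := by
      have h1 : M = (M ^ s) ^ (1/s) := by
        rw [← Real.rpow_mul hM0.le, mul_one_div, div_self hs0.ne', Real.rpow_one]
      rw [h1]
      calc (M ^ s) ^ (1/s) ≤ (2 ^ s * R ^ (1/β) * A ^ p) ^ (1/s) :=
            Real.rpow_le_rpow (Real.rpow_nonneg hM0.le _) hMs (by positivity)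
        _ = 2 * R ^ t * A ^ (1 - t) := by
            rw [Real.mul_rpow (by positivity) (Real.rpow_nonneg hA0.le _),
              Real.mul_rpow (by positivity) (Real.rpow_nonneg hR.le _),
              ← Real.rpow_mul (by norm_num : (0:ℝ) ≤ 2), ← Real.rpow_mul hR.le,
              ← Real.rpow_mul hA0.le, mul_one_div, div_self hs0.ne', Real.rpow_one,
              ht_s, hp_s]
    have hθeq : t * (1 - p/q) = θ := by
      rw [htdef, hθdef]; field_simp
    have hsum : (1 - t) * (1 - p/q) + p/q = 1 - θ := by
      rw [htdef, hθdef]; field_simp; ring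
    have hRA : R ^ θ * A ^ (1 - θ) = A * (R/A) ^ θ := by
      rw [Real.div_rpow hR.le hA0.le, Real.rpow_sub hA0, Real.rpow_one]
      have : (0:ℝ) < A ^ θ := Real.rpow_pos_of_pos hA0 _
      field_simp
    calc (∫ x in Set.Icc (0:ℝ) 1, |f x| ^ q) ^ (1/q) ≤ M ^ (1 - p/q) * A ^ (p/q) := hkey
      _ ≤ (2 * R ^ t * A ^ (1 - t)) ^ (1 - p/q) * A ^ (p/q) :=
          mul_le_mul_of_nonneg_right (Real.rpow_le_rpow hM0.le hM2 hpq')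
            (Real.rpow_nonneg hA0.le _)
      _ = 2 ^ (1 - p/q) * (A * (R/A) ^ θ) := by
          rw [Real.mul_rpow (by positivity) (Real.rpow_nonneg hA0.le _),
            Real.mul_rpow (by norm_num) (Real.rpow_nonneg hR.le _),
            ← Real.rpow_mul hR.le, ← Real.rpow_mul hA0.le, hθeq, mul_assoc, mul_assoc,
            ← Real.rpow_add hA0, hsum, ← hRA]
      _ ≤ 4 * A * (max 1 (R/A)) ^ θ := by
          have h2e : (2:ℝ) ^ (1 - p/q) ≤ 4 := by
            calc (2:ℝ) ^ (1 - p/q) ≤ (2:ℝ) ^ (1:ℝ) :=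
                  Real.rpow_le_rpow_of_exponent_le (by norm_num) hpq''
              _ = 2 := Real.rpow_one _
              _ ≤ 4 := by norm_num
          have hmm : A * (R/A) ^ θ ≤ A * (max 1 (R/A)) ^ θ :=
            mul_le_mul_of_nonneg_left
              (Real.rpow_le_rpow (by positivity) (le_max_right _ _) hθ0) hA0.le
          calc (2:ℝ) ^ (1 - p/q) * (A * (R/A) ^ θ) ≤ 4 * (A * (max 1 (R/A)) ^ θ) :=
                mul_le_mul h2e hmm
                  (mul_nonneg hA0.le (Real.rpow_nonneg (div_nonneg hR.le hA0.le) _))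
                  (by norm_num)
            _ = 4 * A * (max 1 (R/A)) ^ θ := (mul_assoc 4 A _).symm
end

section
/- Let β ∈ (0,1] and let p be a real number with 1 ≤ p < ∞. There exists a constant C > 0, depending only on β and p, such that for every R > 0 and every function f : [0,1] → ℝ belonging to the Hölder ball C^β(R), with f not identically zero, one has ‖f‖_∞ ≤ C · ‖f‖_p · max(1, R/‖f‖_p)^{(1/p)/(β + 1/p)}. -/
open MeasureTheory

/-- Sup-norm bound via the L^p norm on Hölder balls. -/
theorem sup_norm_le_lp_holder (β p : ℝ) (hβ0 : 0 < β) (hβ1 : β ≤ 1) (hp : 1 ≤ p) :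
    ∃ C : ℝ, 0 < C ∧ ∀ R : ℝ, 0 < R → ∀ f : ℝ → ℝ,
      (∀ x ∈ Set.Icc (0:ℝ) 1, ∀ y ∈ Set.Icc (0:ℝ) 1, |f x - f y| ≤ R * |x - y| ^ β) →
      (∃ x ∈ Set.Icc (0:ℝ) 1, f x ≠ 0) →
      (⨆ x : Set.Icc (0:ℝ) 1, |f x|) ≤
        C * (∫ x in Set.Icc (0:ℝ) 1, |f x| ^ p) ^ (1/p) *
          (max 1 (R / (∫ x in Set.Icc (0:ℝ) 1, |f x| ^ p) ^ (1/p)))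
            ^ ((1/p) / (β + 1/p)) := by
  have hp0 : 0 < p := lt_of_lt_of_le one_pos hp
  refine ⟨4, by norm_num, ?_⟩
  intro R hR f hf hne
  haveI : Nonempty (Set.Icc (0:ℝ) 1) := ⟨⟨0, by norm_num⟩⟩
  -- continuity of f on [0,1]
  have hcont : ContinuousOn f (Set.Icc (0:ℝ) 1) := by
    intro x hx
    rw [Metric.continuousWithinAt_iff]
    intro ε hε
    refine ⟨(ε / R) ^ (1/β), Real.rpow_pos_of_pos (div_pos hε hR) _, ?_⟩
    intro y hy hdist
    have h1 : |f y - f x| ≤ R * |y - x| ^ β := hf y hy x hx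
    have h2 : |y - x| ^ β < ((ε / R) ^ (1/β)) ^ β := by
      refine Real.rpow_lt_rpow (abs_nonneg _) ?_ hβ0
      simpa [Real.dist_eq] using hdist
    have h3 : ((ε / R) ^ (1/β)) ^ β = ε / R := by
      rw [← Real.rpow_mul (div_pos hε hR).le, one_div, inv_mul_cancel₀ hβ0.ne',
        Real.rpow_one]
    rw [Real.dist_eq]
    calc |f y - f x| ≤ R * |y - x| ^ β := h1
      _ < R * (ε / R) := by rw [← h3]; exact (mul_lt_mul_iff_right₀ hR).2 h2
      _ = ε := by field_simp
  -- maximum point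
  obtain ⟨x₀, hx₀, hmax⟩ := isCompact_Icc.exists_isMaxOn ⟨0, by norm_num⟩ hcont.abs
  set M := |f x₀| with hMdef
  have hmax' : ∀ y ∈ Set.Icc (0:ℝ) 1, |f y| ≤ M := fun y hy => hmax hy
  have hM : 0 < M := by
    obtain ⟨x', hx', hfx'⟩ := hne
    exact lt_of_lt_of_le (abs_pos.2 hfx') (hmax' x' hx')
  have hsup : (⨆ x : Set.Icc (0:ℝ) 1, |f x|) ≤ M := ciSup_le fun x => hmax' x x.2
  -- integrability
  have hgnn : ∀ x : ℝ, 0 ≤ |f x| ^ p := fun x => Real.rpow_nonneg (abs_nonneg _) _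
  have hgcont : ContinuousOn (fun x => |f x| ^ p) (Set.Icc (0:ℝ) 1) :=
    hcont.abs.rpow_const fun x _ => Or.inr hp0.le
  have hInt : IntegrableOn (fun x => |f x| ^ p) (Set.Icc (0:ℝ) 1) :=
    hgcont.integrableOn_Icc
  set Ip := ∫ x in Set.Icc (0:ℝ) 1, |f x| ^ p with hIpdef
  set N := Ip ^ (1/p) with hNdef
  set θ := (1/p) / (β + 1/p) with hθdef
  have hθpos : 0 < θ := div_pos (by positivity) (by positivity)
  -- geometric setup
  set δ := (M / (2 * R)) ^ (1/β) with hδdef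
  have hδpos : 0 < δ := Real.rpow_pos_of_pos (by positivity) _
  set t := min δ (1/2 : ℝ) with htdef
  have ht : 0 < t := lt_min hδpos (by norm_num)
  have ht2 : t ≤ 1/2 := min_le_right _ _
  have htδ : t ≤ δ := min_le_left _ _
  set a := min x₀ (1 - t) with hadef
  have ha0 : 0 ≤ a := le_min hx₀.1 (by linarith)
  have hab1 : a + t ≤ 1 := by
    have : a ≤ 1 - t := min_le_right _ _
    linarith
  have hJsub : Set.Icc a (a + t) ⊆ Set.Icc (0:ℝ) 1 := fun x hx =>
    ⟨le_trans ha0 hx.1, le_trans hx.2 hab1⟩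
  have hJclose : ∀ x ∈ Set.Icc a (a + t), |x₀ - x| ≤ t := by
    intro x hx
    have h1 : x₀ - t ≤ a := le_min (by linarith) (by linarith [hx₀.2])
    have h2 : a ≤ x₀ := min_le_left _ _
    rw [abs_le]
    constructor <;> [linarith [hx.2]; linarith [hx.1]]
  -- δ ^ β = M / (2R)
  have hδβ : δ ^ β = M / (2 * R) := by
    rw [hδdef, ← Real.rpow_mul (by positivity), one_div, inv_mul_cancel₀ hβ0.ne',
      Real.rpow_one]
  -- lower bound for |f| on J
  have hlow : ∀ x ∈ Set.Icc a (a + t), M / 2 ≤ |f x| := by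
    intro x hx
    have h1 : |f x₀ - f x| ≤ R * |x₀ - x| ^ β := hf x₀ hx₀ x (hJsub hx)
    have h2 : |x₀ - x| ^ β ≤ δ ^ β :=
      Real.rpow_le_rpow (abs_nonneg _) (le_trans (hJclose x hx) htδ) hβ0.le
    have h3 : R * δ ^ β = M / 2 := by
      rw [hδβ]; field_simp
    have h4 : M - |f x| ≤ |f x₀ - f x| := by
      have := abs_sub_abs_le_abs_sub (f x₀) (f x)
      linarith [this]
    nlinarith [h1, h2, h3, h4, hR]
  -- integral lower bound
  have hconst : ∫ x in Set.Icc a (a + t), (M/2) ^ p = t * (M/2) ^ p := by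
    rw [setIntegral_const, Real.volume_real_Icc_of_le (by linarith), smul_eq_mul]
    rw [show a + t - a = t by ring]
  have hstep1 : ∫ x in Set.Icc a (a + t), (M/2) ^ p ≤
      ∫ x in Set.Icc a (a + t), |f x| ^ p := by
    refine setIntegral_mono_on ?_ (hInt.mono_set hJsub) measurableSet_Icc ?_
    · exact integrableOn_const (by rw [Real.volume_Icc]; exact ENNReal.ofReal_ne_top)
    · intro x hx
      exact Real.rpow_le_rpow (by positivity) (hlow x hx) hp0.le
  have hstep2 : ∫ x in Set.Icc a (a + t), |f x| ^ p ≤ Ip := by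
    refine setIntegral_mono_set hInt (Filter.Eventually.of_forall fun x => hgnn x) ?_
    exact HasSubset.Subset.eventuallyLE hJsub
  have hkey : t * (M/2) ^ p ≤ Ip := by
    rw [← hconst]; exact hstep1.trans hstep2
  have hIp : 0 < Ip := lt_of_lt_of_le (by positivity) hkey
  have hN : 0 < N := Real.rpow_pos_of_pos hIp _
  have hNp : N ^ p = Ip := by
    rw [hNdef, ← Real.rpow_mul hIp.le, one_div, inv_mul_cancel₀ hp0.ne', Real.rpow_one]
  have hkeyN : t * (M/2) ^ p ≤ N ^ p := by rw [hNp]; exact hkey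
  -- max factor ≥ 1
  have hmaxθ : 1 ≤ (max 1 (R / N)) ^ θ :=
    Real.one_le_rpow (le_max_left _ _) hθpos.le
  have hmain : M ≤ 4 * N * (max 1 (R / N)) ^ θ := by
    rcases le_or_gt (1/2 : ℝ) δ with hcase | hcase
    · -- t = 1/2, M ≤ 4 N
      have ht12 : t = 1/2 := min_eq_right hcase
      have hhalf : ((1:ℝ)/2) ^ p ≤ 1/2 := by
        calc ((1:ℝ)/2) ^ p ≤ ((1:ℝ)/2) ^ (1:ℝ) :=
              Real.rpow_le_rpow_of_exponent_ge (by norm_num) (by norm_num) hp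
          _ = 1/2 := Real.rpow_one _
      have h4p : (M/4) ^ p ≤ N ^ p := by
        have e : (M/4 : ℝ) = (M/2) * (1/2) := by ring
        rw [e, Real.mul_rpow (by positivity) (by norm_num)]
        have : (M/2) ^ p * (1/2 : ℝ) ^ p ≤ (M/2) ^ p * (1/2) :=
          mul_le_mul_of_nonneg_left hhalf (by positivity)
        calc (M/2) ^ p * (1/2:ℝ) ^ p ≤ (M/2) ^ p * (1/2) := this
          _ = t * (M/2) ^ p := by rw [ht12]; ring
          _ ≤ N ^ p := hkeyN
      have hM4 : M/4 ≤ N := by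
        have := Real.rpow_le_rpow (by positivity) h4p (by positivity : (0:ℝ) ≤ 1/p)
        rwa [← Real.rpow_mul (by positivity), ← Real.rpow_mul hN.le,
          mul_one_div_cancel hp0.ne', Real.rpow_one, Real.rpow_one] at this
      calc M ≤ 4 * N := by linarith
        _ = 4 * N * 1 := by ring
        _ ≤ 4 * N * (max 1 (R / N)) ^ θ := by
            exact mul_le_mul_of_nonneg_left hmaxθ (by positivity)
    · -- t = δ
      have htδ' : t = δ := min_eq_left hcase.le
      set s := p + 1/β with hsdef
      have hs : 0 < s := by positivity
      have hθeq : θ = (1/β) * (1/s) := by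
        rw [hθdef, hsdef]
        have hb : β + 1/p ≠ 0 := by positivity
        have hs' : p + 1/β ≠ 0 := by positivity
        field_simp
      have hθ'eq : 1 - θ = p * (1/s) := by
        rw [hθeq, hsdef]
        have hs' : p + 1/β ≠ 0 := by positivity
        field_simp
        ring
      have hδeq : δ = (M/2) ^ (1/β) / R ^ (1/β) := by
        rw [hδdef, show M / (2 * R) = (M/2) / R by ring,
          Real.div_rpow (by positivity) hR.le]
      have hkey2 : (M/2) ^ s ≤ N ^ p * R ^ (1/β) := by
        have e1 : δ * (M/2) ^ p = (M/2) ^ s / R ^ (1/β) := by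
          rw [hδeq, hsdef, Real.rpow_add (by positivity : (0:ℝ) < M/2)]
          ring
        have e2 : (M/2) ^ s / R ^ (1/β) ≤ N ^ p := by
          rw [← e1, ← htδ']; exact hkeyN
        rw [div_le_iff₀ (by positivity)] at e2
        exact e2
      have hRβs : (R ^ (1/β)) ^ (1/s) = R ^ θ := by
        rw [← Real.rpow_mul hR.le, ← hθeq]
      have hNps : (N ^ p) ^ (1/s) = N ^ (1 - θ) := by
        rw [← Real.rpow_mul hN.le, ← hθ'eq]
      have hMle : M/2 ≤ N ^ (1 - θ) * R ^ θ := by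
        have := Real.rpow_le_rpow (by positivity) hkey2 (by positivity : (0:ℝ) ≤ 1/s)
        rwa [← Real.rpow_mul (by positivity : (0:ℝ) ≤ M/2),
          mul_one_div_cancel hs.ne', Real.rpow_one,
          Real.mul_rpow (by positivity) (by positivity), hRβs, hNps] at this
      have hfactor : N ^ (1 - θ) * R ^ θ = N * (R / N) ^ θ := by
        rw [Real.rpow_sub hN, Real.rpow_one, Real.div_rpow hR.le hN.le]
        field_simp
      have hRNmax : (R / N) ^ θ ≤ (max 1 (R / N)) ^ θ :=
        Real.rpow_le_rpow (by positivity) (le_max_right _ _) hθpos.le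
      have : M ≤ 2 * (N * (max 1 (R/N)) ^ θ) := by
        have h1 : M/2 ≤ N * (R/N) ^ θ := by rw [← hfactor]; exact hMle
        have h2 : N * (R/N) ^ θ ≤ N * (max 1 (R/N)) ^ θ :=
          mul_le_mul_of_nonneg_left hRNmax hN.le
        linarith
      have hNmax : 0 ≤ N * (max 1 (R/N)) ^ θ := by positivity
      calc M ≤ 2 * (N * (max 1 (R/N)) ^ θ) := this
        _ ≤ 4 * (N * (max 1 (R/N)) ^ θ) := by linarith
        _ = 4 * N * (max 1 (R/N)) ^ θ := by ring
  exact hsup.trans hmain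
end

section
/- Let β ∈ (0,1], R > 0, and let p be a real number with 1 ≤ p < ∞. Then every function f : [0,1] → ℝ belonging to the Hölder ball C^β(R) satisfies ‖f‖_p ≥ ‖f‖_∞ · min(1, ‖f‖_∞/R)^{1/(βp)} · (∫_0^1 (1 − y^β)^p dy)^{1/p}. -/
open MeasureTheory intervalIntegral

lemma cont_rpow_const' {q : ℝ} (hq : 0 < q) : Continuous fun t : ℝ => t ^ q := by
  rw [continuous_iff_continuousAt]
  intro t
  rcases eq_or_ne t 0 with h | h
  · exact h ▸ Real.continuousAt_rpow_const 0 q (Or.inr hq.le)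
  · exact Real.continuousAt_rpow_const t q (Or.inl h)

lemma sum_integral_ge {G : ℝ → ℝ} (hcont : Continuous G) (h0 : ∀ t, 0 ≤ G t)
    (hanti : ∀ s t : ℝ, 0 ≤ s → s ≤ t → G t ≤ G s) {a b c : ℝ} (ha : 0 ≤ a) (hb : 0 ≤ b)
    (hcab : c ≤ a + b) :
    ∫ t in (0:ℝ)..c, G t ≤ (∫ t in (0:ℝ)..a, G t) + ∫ t in (0:ℝ)..b, G t := by
  have hb' : 0 ≤ ∫ t in (0:ℝ)..b, G t := intervalIntegral.integral_nonneg hb fun u _ => h0 u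
  have hint : ∀ u v : ℝ, IntervalIntegrable G volume u v := fun u v =>
    hcont.intervalIntegrable u v
  rcases le_or_gt c a with h | h
  · have hsplit : (∫ t in (0:ℝ)..c, G t) + ∫ t in c..a, G t = ∫ t in (0:ℝ)..a, G t :=
      intervalIntegral.integral_add_adjacent_intervals (hint 0 c) (hint c a)
    have h2 : 0 ≤ ∫ t in c..a, G t := intervalIntegral.integral_nonneg h fun u _ => h0 u
    linarith
  · have hsplit : (∫ t in (0:ℝ)..a, G t) + ∫ t in a..c, G t = ∫ t in (0:ℝ)..c, G t :=
      intervalIntegral.integral_add_adjacent_intervals (hint 0 a) (hint a c)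
    have he : ∫ s in (0:ℝ)..(c-a), G (s + a) = ∫ t in a..c, G t := by
      rw [intervalIntegral.integral_comp_add_right]
      norm_num
    have hle1 : ∫ s in (0:ℝ)..(c-a), G (s + a) ≤ ∫ s in (0:ℝ)..(c-a), G s := by
      apply intervalIntegral.integral_mono_on (by linarith)
        ((hcont.comp (continuous_id.add continuous_const)).intervalIntegrable _ _) (hint _ _)
      intro x hx
      exact hanti x (x + a) hx.1 (by linarith)
    have hle2 : ∫ s in (0:ℝ)..(c-a), G s ≤ ∫ s in (0:ℝ)..b, G s := by
      have hsplit2 : (∫ t in (0:ℝ)..(c-a), G t) + ∫ t in (c-a)..b, G t = ∫ t in (0:ℝ)..b, G t :=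
        intervalIntegral.integral_add_adjacent_intervals (hint 0 (c-a)) (hint (c-a) b)
      have h2 : 0 ≤ ∫ t in (c-a)..b, G t :=
        intervalIntegral.integral_nonneg (by linarith) fun u _ => h0 u
      linarith
    linarith

/-- Lower bound for the L^p norm in terms of the sup norm on Hölder balls. -/
theorem lp_ge_sup_holder (β R p : ℝ) (hβ0 : 0 < β) (hβ1 : β ≤ 1) (hR : 0 < R)
    (hp : 1 ≤ p) (f : ℝ → ℝ)
    (hf : ∀ x ∈ Set.Icc (0:ℝ) 1, ∀ y ∈ Set.Icc (0:ℝ) 1, |f x - f y| ≤ R * |x - y| ^ β) :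
    (∫ x in Set.Icc (0:ℝ) 1, |f x| ^ p) ^ (1/p) ≥
      (⨆ x : Set.Icc (0:ℝ) 1, |f x|) *
        (min 1 ((⨆ x : Set.Icc (0:ℝ) 1, |f x|) / R)) ^ (1 / (β * p)) *
        (∫ y in Set.Icc (0:ℝ) 1, (1 - y ^ β) ^ p) ^ (1/p) := by
  have hp0 : (0:ℝ) < p := lt_of_lt_of_le one_pos hp
  -- continuity of f on Icc
  have hfc : ContinuousOn f (Set.Icc (0:ℝ) 1) := by
    intro x hx
    have h1 : Filter.Tendsto (fun y => f y - f x) (nhdsWithin x (Set.Icc (0:ℝ) 1)) (nhds 0) := by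
      apply squeeze_zero_norm' (a := fun y => R * |y - x| ^ β)
      · filter_upwards [self_mem_nhdsWithin] with y hy
        simpa using hf y hy x hx
      · have hcont : Continuous (fun y : ℝ => R * |y - x| ^ β) :=
          continuous_const.mul ((cont_rpow_const' hβ0).comp
            ((continuous_id.sub continuous_const).abs))
        have h2 := (hcont.tendsto x).mono_left
          (nhdsWithin_le_nhds (s := Set.Icc (0:ℝ) 1))
        simpa [Real.zero_rpow hβ0.ne'] using h2
    have := h1.add_const (f x)
    simpa [ContinuousWithinAt] using this
  -- max attained
  obtain ⟨x₀, hx₀, hmax⟩ := isCompact_Icc.exists_isMaxOn (s := Set.Icc (0:ℝ) 1)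
    ⟨0, by norm_num⟩ hfc.abs
  have hmax' : ∀ y ∈ Set.Icc (0:ℝ) 1, |f y| ≤ |f x₀| := hmax
  have hMsup : (⨆ x : Set.Icc (0:ℝ) 1, |f (x:ℝ)|) = |f x₀| := by
    haveI : Nonempty (Set.Icc (0:ℝ) 1) := ⟨⟨0, by norm_num⟩⟩
    apply le_antisymm
    · exact ciSup_le fun x => hmax' x x.2
    · exact le_ciSup ⟨|f x₀|, by rintro v ⟨x, rfl⟩; exact hmax' x x.2⟩ (⟨x₀, hx₀⟩ : Set.Icc (0:ℝ) 1)
  rw [hMsup]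
  set M := |f x₀| with hMdef
  have hM0 : 0 ≤ M := abs_nonneg _
  -- nonnegativity of the LHS integral
  have hLnn : 0 ≤ ∫ x in Set.Icc (0:ℝ) 1, |f x| ^ p :=
    MeasureTheory.integral_nonneg fun x => Real.rpow_nonneg (abs_nonneg _) p
  rcases eq_or_lt_of_le hM0 with hM | hM
  · rw [← hM, zero_mul, zero_mul]
    exact Real.rpow_nonneg hLnn _
  -- main case : 0 < M
  set δ := (min 1 (M / R)) ^ (1/β) with hδdef
  have hmin0 : 0 < min 1 (M / R) := lt_min one_pos (div_pos hM hR)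
  have hδ0 : 0 < δ := Real.rpow_pos_of_pos hmin0 _
  have hδ1 : δ ≤ 1 := Real.rpow_le_one hmin0.le (min_le_left _ _) (by positivity)
  set G : ℝ → ℝ := fun t => max 0 (M - R * t ^ β) ^ p with hGdef
  have hGc : Continuous G := (cont_rpow_const' hp0).comp
    (continuous_const.max (continuous_const.sub (continuous_const.mul (cont_rpow_const' hβ0))))
  have hG0 : ∀ t, 0 ≤ G t := fun t => Real.rpow_nonneg (le_max_left _ _) _
  have hGanti : ∀ s t : ℝ, 0 ≤ s → s ≤ t → G t ≤ G s := by
    intro s t hs hst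
    apply Real.rpow_le_rpow (le_max_left _ _) _ hp0.le
    apply max_le_max le_rfl
    have h1 : s ^ β ≤ t ^ β := Real.rpow_le_rpow hs hst hβ0.le
    have := mul_le_mul_of_nonneg_left h1 hR.le
    linarith
  -- pointwise bound
  have hpt : ∀ x ∈ Set.Icc (0:ℝ) 1, G (|x - x₀|) ≤ |f x| ^ p := by
    intro x hx
    have h0 : |f x₀ - f x| ≤ R * |x₀ - x| ^ β := hf x₀ hx₀ x hx
    have habs : |f x₀| - |f x| ≤ |f x₀ - f x| := abs_sub_abs_le_abs_sub _ _
    have h1 : M - R * |x - x₀| ^ β ≤ |f x| := by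
      rw [abs_sub_comm x x₀]; linarith
    have h2 : max 0 (M - R * |x - x₀| ^ β) ≤ |f x| := max_le (abs_nonneg _) h1
    exact Real.rpow_le_rpow (le_max_left _ _) h2 hp0.le
  -- step 1 : integral comparison on Icc
  have habsc : Continuous fun x : ℝ => G (|x - x₀|) :=
    hGc.comp ((continuous_id.sub continuous_const).abs)
  have step1 : (∫ x in Set.Icc (0:ℝ) 1, G (|x - x₀|)) ≤ ∫ x in Set.Icc (0:ℝ) 1, |f x| ^ p := by
    apply MeasureTheory.setIntegral_mono_on
      (habsc.continuousOn.integrableOn_Icc)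
      (((cont_rpow_const' hp0).comp_continuousOn hfc.abs).integrableOn_Icc)
      measurableSet_Icc hpt
  -- step 2 : split the Icc integral into two interval integrals of G
  have hx01 : (0:ℝ) ≤ x₀ := hx₀.1
  have hx02 : x₀ ≤ 1 := hx₀.2
  have step2 : (∫ x in Set.Icc (0:ℝ) 1, G (|x - x₀|)) =
      (∫ t in (0:ℝ)..x₀, G t) + ∫ t in (0:ℝ)..(1 - x₀), G t := by
    have e1 : (∫ x in Set.Icc (0:ℝ) 1, G (|x - x₀|)) = ∫ x in (0:ℝ)..1, G (|x - x₀|) := by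
      rw [intervalIntegral.integral_of_le zero_le_one,
        MeasureTheory.integral_Icc_eq_integral_Ioc]
    have e2 : (∫ x in (0:ℝ)..x₀, G (|x - x₀|)) + ∫ x in x₀..1, G (|x - x₀|) =
        ∫ x in (0:ℝ)..1, G (|x - x₀|) :=
      intervalIntegral.integral_add_adjacent_intervals
        (habsc.intervalIntegrable _ _) (habsc.intervalIntegrable _ _)
    have e3 : (∫ x in (0:ℝ)..x₀, G (|x - x₀|)) = ∫ t in (0:ℝ)..x₀, G t := by
      have : (∫ x in (0:ℝ)..x₀, G (|x - x₀|)) = ∫ x in (0:ℝ)..x₀, G (x₀ - x) := by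
        apply intervalIntegral.integral_congr
        intro x hx
        rw [Set.uIcc_of_le hx01] at hx
        have hh : x - x₀ ≤ 0 := by linarith [hx.2]
        show G |x - x₀| = G (x₀ - x)
        rw [abs_of_nonpos hh, neg_sub]
      rw [this, intervalIntegral.integral_comp_sub_left G x₀, sub_self, sub_zero]
    have e4 : (∫ x in x₀..1, G (|x - x₀|)) = ∫ t in (0:ℝ)..(1 - x₀), G t := by
      have : (∫ x in x₀..1, G (|x - x₀|)) = ∫ x in x₀..1, G (x - x₀) := by
        apply intervalIntegral.integral_congr
        intro x hx
        rw [Set.uIcc_of_le hx02] at hx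
        have hh : 0 ≤ x - x₀ := by linarith [hx.1]
        show G |x - x₀| = G (x - x₀)
        rw [abs_of_nonneg hh]
      rw [this, intervalIntegral.integral_comp_sub_right G x₀, sub_self]
    rw [e1, ← e2, e3, e4]
  -- step 3 : combine
  have step3 : (∫ t in (0:ℝ)..δ, G t) ≤ (∫ t in (0:ℝ)..x₀, G t) + ∫ t in (0:ℝ)..(1 - x₀), G t :=
    sum_integral_ge hGc hG0 hGanti hx01 (by linarith) (by linarith)
  -- step 4 : lower bound for ∫₀^δ G
  have hδβ : δ ^ β = min 1 (M / R) := by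
    rw [hδdef, ← Real.rpow_mul hmin0.le, one_div_mul_cancel hβ0.ne', Real.rpow_one]
  have hRδ : R * δ ^ β ≤ M := by
    have h1 : R * min 1 (M / R) ≤ R * (M / R) :=
      mul_le_mul_of_nonneg_left (min_le_right _ _) hR.le
    have h2 : R * (M / R) = M := by field_simp
    rw [hδβ]; linarith
  -- continuity of auxiliary integrands
  have hcI : Continuous fun y : ℝ => (1 - y ^ β) ^ p :=
    (cont_rpow_const' hp0).comp (continuous_const.sub (cont_rpow_const' hβ0))
  have hptδ : ∀ y ∈ Set.Icc (0:ℝ) 1, M ^ p * (1 - y ^ β) ^ p ≤ G (δ * y) := by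
    intro y hy
    have hyβ1 : y ^ β ≤ 1 := Real.rpow_le_one hy.1 hy.2 hβ0.le
    have hyβ0 : 0 ≤ y ^ β := Real.rpow_nonneg hy.1 β
    have hmul : (δ * y) ^ β = δ ^ β * y ^ β := Real.mul_rpow hδ0.le hy.1
    have hbase : M * (1 - y ^ β) ≤ max 0 (M - R * (δ * y) ^ β) := by
      refine le_trans ?_ (le_max_right _ _)
      rw [hmul]
      have h3 := mul_le_mul_of_nonneg_right hRδ hyβ0
      nlinarith
    have h4 : (M * (1 - y ^ β)) ^ p ≤ G (δ * y) :=
      Real.rpow_le_rpow (mul_nonneg hM.le (by linarith)) hbase hp0.le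
    rwa [Real.mul_rpow hM.le (by linarith)] at h4
  have step4 : δ * (M ^ p * ∫ y in (0:ℝ)..1, (1 - y ^ β) ^ p) ≤ ∫ t in (0:ℝ)..δ, G t := by
    have hcomp : ∫ y in (0:ℝ)..1, G (δ * y) = δ⁻¹ * ∫ t in (0:ℝ)..δ, G t := by
      rw [intervalIntegral.integral_comp_mul_left G hδ0.ne', smul_eq_mul, mul_zero, mul_one]
    have hmono : (∫ y in (0:ℝ)..1, M ^ p * (1 - y ^ β) ^ p) ≤ ∫ y in (0:ℝ)..1, G (δ * y) :=
      intervalIntegral.integral_mono_on zero_le_one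
        ((continuous_const.mul hcI).intervalIntegrable _ _)
        ((hGc.comp (continuous_const.mul continuous_id)).intervalIntegrable _ _) hptδ
    rw [intervalIntegral.integral_const_mul] at hmono
    rw [hcomp] at hmono
    calc δ * (M ^ p * ∫ y in (0:ℝ)..1, (1 - y ^ β) ^ p)
        ≤ δ * (δ⁻¹ * ∫ t in (0:ℝ)..δ, G t) :=
          mul_le_mul_of_nonneg_left hmono hδ0.le
      _ = ∫ t in (0:ℝ)..δ, G t := by field_simp
  -- assemble : key inequality without roots
  set I := ∫ y in (0:ℝ)..1, (1 - y ^ β) ^ p with hIdef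
  have hIcc : (∫ y in Set.Icc (0:ℝ) 1, (1 - y ^ β) ^ p) = I := by
    rw [hIdef, intervalIntegral.integral_of_le zero_le_one,
      MeasureTheory.integral_Icc_eq_integral_Ioc]
  have hI0 : 0 ≤ I :=
    intervalIntegral.integral_nonneg zero_le_one fun y hy =>
      Real.rpow_nonneg (by
        have : y ^ β ≤ 1 := Real.rpow_le_one hy.1 hy.2 hβ0.le
        linarith) _
  have key : δ * (M ^ p * I) ≤ ∫ x in Set.Icc (0:ℝ) 1, |f x| ^ p := by
    calc δ * (M ^ p * I) ≤ ∫ t in (0:ℝ)..δ, G t := step4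
      _ ≤ (∫ t in (0:ℝ)..x₀, G t) + ∫ t in (0:ℝ)..(1 - x₀), G t := step3
      _ = ∫ x in Set.Icc (0:ℝ) 1, G (|x - x₀|) := step2.symm
      _ ≤ _ := step1
  -- final : take p-th roots
  rw [hIcc, ge_iff_le]
  have hrhs : M * (min 1 (M / R)) ^ (1 / (β * p)) * I ^ (1/p) = (δ * (M ^ p * I)) ^ (1/p) := by
    rw [Real.mul_rpow hδ0.le (mul_nonneg (Real.rpow_nonneg hM.le p) hI0),
      Real.mul_rpow (Real.rpow_nonneg hM.le p) hI0,
      ← Real.rpow_mul hM.le, mul_one_div_cancel hp0.ne', Real.rpow_one,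
      hδdef, ← Real.rpow_mul hmin0.le]
    have : 1 / β * (1 / p) = 1 / (β * p) := by
      rw [div_mul_div_comm, one_mul]
    rw [this]; ring
  rw [hrhs]
  exact Real.rpow_le_rpow (by positivity) key (by positivity)
end

section
/- Let β ∈ (0,1]. There exists a constant C' > 0, depending only on β, such that for every R > 0, every δ with 0 < δ ≤ R, and every pair of functions f, g ∈ C^β(R) with ‖f − g‖_2 ≤ δ, one has ‖f − g‖_∞ ≤ C' · R^{1/(2β+1)} · δ^{2β/(2β+1)}. -/
open MeasureTheory

lemma rpow_two_aux (x : ℝ) : x ^ (2:ℝ) = x ^ 2 := by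
  rw [show (2:ℝ) = ((2:ℕ):ℝ) by norm_num, Real.rpow_natCast]

/-- A Hölder-type modulus bound on `[0,1]` implies continuity on `[0,1]`. -/
lemma holder_continuousOn_aux {h : ℝ → ℝ} {C β : ℝ} (hβ : 0 < β)
    (hb : ∀ x ∈ Set.Icc (0:ℝ) 1, ∀ y ∈ Set.Icc (0:ℝ) 1, |h x - h y| ≤ C * |x - y| ^ β) :
    ContinuousOn h (Set.Icc (0:ℝ) 1) := by
  intro x hx
  have l1 : Filter.Tendsto (fun y : ℝ => |y - x|) (nhdsWithin x (Set.Icc 0 1)) (nhds 0) := by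
    apply Filter.Tendsto.mono_left _ nhdsWithin_le_nhds
    have : Continuous (fun y : ℝ => |y - x|) := by fun_prop
    simpa using this.tendsto x
  have l2 : Filter.Tendsto (fun t : ℝ => C * t ^ β) (nhds 0) (nhds 0) := by
    have hc : ContinuousAt (fun t : ℝ => t ^ β) 0 :=
      Real.continuousAt_rpow_const 0 β (Or.inr hβ.le)
    have this : ContinuousAt (fun t : ℝ => C * t ^ β) 0 := continuousAt_const.mul hc
    simpa [Real.zero_rpow hβ.ne'] using this.tendsto
  have hb0 : Filter.Tendsto (fun y : ℝ => C * |y - x| ^ β) (nhdsWithin x (Set.Icc 0 1))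
      (nhds 0) := l2.comp l1
  have key : Filter.Tendsto (fun y => h y - h x) (nhdsWithin x (Set.Icc 0 1)) (nhds 0) := by
    apply squeeze_zero_norm' _ hb0
    filter_upwards [self_mem_nhdsWithin] with y hy
    simpa [Real.norm_eq_abs] using hb y hy x hx
  have : Filter.Tendsto h (nhdsWithin x (Set.Icc 0 1)) (nhds (h x)) := by
    have := key.add_const (h x)
    simpa using this
  exact this

/-- Sup-norm bound on the difference of two Hölder functions that are L²-close. -/
theorem sup_norm_diff_holder (β : ℝ) (hβ0 : 0 < β) (hβ1 : β ≤ 1) :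
    ∃ C' : ℝ, 0 < C' ∧ ∀ R : ℝ, 0 < R → ∀ δ : ℝ, 0 < δ → δ ≤ R → ∀ f g : ℝ → ℝ,
      (∀ x ∈ Set.Icc (0:ℝ) 1, ∀ y ∈ Set.Icc (0:ℝ) 1, |f x - f y| ≤ R * |x - y| ^ β) →
      (∀ x ∈ Set.Icc (0:ℝ) 1, ∀ y ∈ Set.Icc (0:ℝ) 1, |g x - g y| ≤ R * |x - y| ^ β) →
      (∫ x in Set.Icc (0:ℝ) 1, |f x - g x| ^ (2:ℝ)) ^ ((1:ℝ)/2) ≤ δ →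
      (⨆ x : Set.Icc (0:ℝ) 1, |f x - g x|) ≤
        C' * R ^ (1 / (2 * β + 1)) * δ ^ (2 * β / (2 * β + 1)) := by
  refine ⟨4, by norm_num, ?_⟩
  intro R hR δ hδ hδR f g hf hg hL2
  set p : ℝ := 2 * β + 1 with hp
  have hp0 : 0 < p := by positivity
  set K : ℝ := R ^ (1 / p) * δ ^ (2 * β / p) with hK
  have hK0 : 0 < K := by positivity
  -- the difference function
  set h : ℝ → ℝ := fun x => f x - g x with hh
  have hH : ∀ x ∈ Set.Icc (0:ℝ) 1, ∀ y ∈ Set.Icc (0:ℝ) 1,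
      |h x - h y| ≤ 2 * R * |x - y| ^ β := by
    intro x hx y hy
    have h1 := hf x hx y hy
    have h2 := hg x hx y hy
    have : h x - h y = (f x - f y) - (g x - g y) := by simp [hh]; ring
    calc |h x - h y| ≤ |f x - f y| + |g x - g y| := by rw [this]; exact abs_sub _ _
      _ ≤ 2 * R * |x - y| ^ β := by linarith
  have hcont : ContinuousOn h (Set.Icc (0:ℝ) 1) := holder_continuousOn_aux hβ0 hH
  have hcont2 : ContinuousOn (fun x => |h x| ^ (2:ℝ)) (Set.Icc (0:ℝ) 1) :=
    (hcont.abs).rpow_const (fun x _ => Or.inr (by norm_num))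
  have hInt : IntegrableOn (fun x => |h x| ^ (2:ℝ)) (Set.Icc (0:ℝ) 1) volume :=
    hcont2.integrableOn_compact isCompact_Icc
  have hnonneg : ∀ x, 0 ≤ |h x| ^ (2:ℝ) := fun x => Real.rpow_nonneg (abs_nonneg _) _
  set I : ℝ := ∫ x in Set.Icc (0:ℝ) 1, |h x| ^ (2:ℝ) with hI
  have hI0 : 0 ≤ I := setIntegral_nonneg measurableSet_Icc (fun x _ => hnonneg x)
  have hIδ : I ≤ δ ^ 2 := by
    have h1 : (I ^ ((1:ℝ)/2)) ^ 2 ≤ δ ^ 2 :=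
      pow_le_pow_left₀ (Real.rpow_nonneg hI0 _) hL2 2
    calc I = (I ^ ((1:ℝ)/2)) ^ 2 := by
            rw [← rpow_two_aux, ← Real.rpow_mul hI0]
            norm_num
      _ ≤ δ ^ 2 := h1
  -- bound each point
  haveI : Nonempty (Set.Icc (0:ℝ) 1) := ⟨⟨0, by norm_num⟩⟩
  apply ciSup_le
  rintro ⟨x0, hx0⟩
  show |h x0| ≤ 4 * R ^ (1 / p) * δ ^ (2 * β / p)
  set a : ℝ := |h x0| with ha
  rcases eq_or_lt_of_le (abs_nonneg (h x0)) with ha0 | ha0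
  · have haz : a = 0 := by rw [ha, ← ha0]
    rw [haz]; positivity
  have ha0 : 0 < a := ha0
  -- choose the interval
  set t : ℝ := min ((a / (4 * R)) ^ (1/β)) (1/2) with ht
  have hs0 : 0 < a / (4 * R) := by positivity
  have ht0 : 0 < t := lt_min (Real.rpow_pos_of_pos hs0 _) (by norm_num)
  have ht2 : t ≤ 1/2 := min_le_right _ _
  obtain ⟨u, hu0, hu1, hux1, hux2⟩ : ∃ u : ℝ, 0 ≤ u ∧ u + t ≤ 1 ∧ u ≤ x0 ∧ x0 ≤ u + t := by
    rcases le_or_gt x0 (1/2) with hc | hc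
    · exact ⟨x0, hx0.1, by linarith, le_refl _, by linarith⟩
    · exact ⟨x0 - t, by linarith, by linarith [hx0.2], by linarith, by linarith⟩
  have hJsub : Set.Icc u (u + t) ⊆ Set.Icc (0:ℝ) 1 := by
    intro y hy; exact ⟨by linarith [hy.1], by linarith [hy.2]⟩
  -- on J, |h| ≥ a/2
  have htβ : t ^ β ≤ a / (4 * R) := by
    calc t ^ β ≤ ((a / (4 * R)) ^ (1/β)) ^ β :=
          Real.rpow_le_rpow ht0.le (min_le_left _ _) hβ0.le
      _ = a / (4 * R) := by
          rw [← Real.rpow_mul hs0.le, one_div, inv_mul_cancel₀ hβ0.ne', Real.rpow_one]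
  have hlow : ∀ y ∈ Set.Icc u (u + t), a / 2 ≤ |h y| := by
    intro y hy
    have hyd : |x0 - y| ≤ t := by
      rw [abs_le]; constructor <;> [linarith [hy.2]; linarith [hy.1]]
    have h1 : |h x0 - h y| ≤ 2 * R * |x0 - y| ^ β := hH x0 hx0 y (hJsub hy)
    have h2 : |x0 - y| ^ β ≤ t ^ β := Real.rpow_le_rpow (abs_nonneg _) hyd hβ0.le
    have h3 : 2 * R * |x0 - y| ^ β ≤ a / 2 := by
      calc 2 * R * |x0 - y| ^ β ≤ 2 * R * (a / (4 * R)) :=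
            mul_le_mul_of_nonneg_left (le_trans h2 htβ) (by positivity)
        _ = a / 2 := by field_simp; ring
    have h4 : a - |h y| ≤ |h x0 - h y| := by
      have := abs_sub_abs_le_abs_sub (h x0) (h y); linarith
    linarith
  -- integral lower bound
  have hkey : (a / 2) ^ 2 * t ≤ δ ^ 2 := by
    have hμ : volume (Set.Icc u (u + t)) = ENNReal.ofReal t := by
      rw [Real.volume_Icc, add_sub_cancel_left]
    have h1 : (a / 2) ^ 2 * t ≤ ∫ y in Set.Icc u (u + t), |h y| ^ (2:ℝ) := by
      have key := setIntegral_ge_of_const_le (μ := volume) (c := (a/2)^2)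
        (f := fun y => |h y| ^ (2:ℝ)) measurableSet_Icc
        (by rw [hμ]; exact ENNReal.ofReal_ne_top)
        (fun y hy => by
          have h6 := hlow y hy
          have h5 : ((a/2) : ℝ) ^ (2:ℝ) ≤ |h y| ^ (2:ℝ) :=
            Real.rpow_le_rpow (by positivity) h6 (by norm_num)
          rw [rpow_two_aux] at h5
          exact h5)
        (hInt.mono_set hJsub)
      rw [measureReal_def, hμ, ENNReal.toReal_ofReal ht0.le, smul_eq_mul] at key
      linarith [mul_comm t ((a/2)^2)]
    have h2 : (∫ y in Set.Icc u (u + t), |h y| ^ (2:ℝ)) ≤ I := by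
      apply setIntegral_mono_set hInt
      · exact Filter.Eventually.of_forall (fun x => hnonneg x)
      · exact Filter.Eventually.of_forall hJsub
    linarith
  -- case split on the min
  rcases le_total ((a / (4 * R)) ^ (1/β)) (1/2) with hc | hc
  · -- t = (a/(4R))^(1/β)
    have htm : t = (a / (4 * R)) ^ (1/β) := min_eq_left hc
    set q : ℝ := p / β with hq
    have hq0 : 0 < q := by positivity
    have hqe : q = 2 + 1/β := by rw [hq, hp]; field_simp
    have hmain : a ^ q ≤ (4 * K) ^ q := by
      have h4R : (0:ℝ) < (4 * R) ^ (1/β) := Real.rpow_pos_of_pos (by positivity) _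
      have hsβ : (0:ℝ) < (a / (4 * R)) ^ (1/β) := Real.rpow_pos_of_pos hs0 _
      have h1 : a ^ 2 * ((a / (4 * R)) ^ (1/β)) ≤ 4 * δ ^ 2 := by
        have hk : (a / 2) ^ 2 * ((a / (4 * R)) ^ (1/β)) ≤ δ ^ 2 := by
          rw [← htm]; exact hkey
        have he : a ^ 2 * ((a / (4 * R)) ^ (1/β))
            = 4 * ((a / 2) ^ 2 * ((a / (4 * R)) ^ (1/β))) := by ring
        rw [he]; linarith
      have e1 : a ^ q = a ^ 2 * a ^ (1/β) := by
        rw [hqe, Real.rpow_add ha0, rpow_two_aux]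
      have e2 : (a / (4 * R)) ^ (1/β) = a ^ (1/β) / (4 * R) ^ (1/β) :=
        Real.div_rpow ha0.le (by positivity) (1/β)
      have h2 : a ^ q ≤ 4 * δ ^ 2 * (4 * R) ^ (1/β) := by
        rw [e1]
        rw [e2] at h1
        calc a ^ 2 * a ^ (1/β)
            = (a ^ 2 * (a ^ (1/β) / (4 * R) ^ (1/β))) * (4 * R) ^ (1/β) := by
              field_simp
          _ ≤ 4 * δ ^ 2 * (4 * R) ^ (1/β) :=
              mul_le_mul_of_nonneg_right h1 h4R.le
      have h3 : (4 * K) ^ q = 4 ^ q * R ^ (1/β) * δ ^ 2 := by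
        rw [hK, Real.mul_rpow (by norm_num) hK0.le,
            Real.mul_rpow (Real.rpow_nonneg hR.le _) (Real.rpow_nonneg hδ.le _),
            ← Real.rpow_mul hR.le, ← Real.rpow_mul hδ.le]
        have e4 : 1 / p * q = 1/β := by rw [hq]; field_simp
        have e5 : 2 * β / p * q = 2 := by rw [hq]; field_simp
        rw [e4, e5, rpow_two_aux]; ring
      have h5 : 4 * δ ^ 2 * (4 * R) ^ (1/β) ≤ 4 ^ q * R ^ (1/β) * δ ^ 2 := by
        have e6 : (4 * R) ^ (1/β) = 4 ^ (1/β) * R ^ (1/β) :=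
          Real.mul_rpow (by norm_num) hR.le
        have e7 : (4:ℝ) * 4 ^ (1/β) = 4 ^ (1 + 1/β) := by
          rw [Real.rpow_add (by norm_num), Real.rpow_one]
        have h8 : (4:ℝ) ^ (1 + 1/β) ≤ 4 ^ q := by
          apply (Real.rpow_le_rpow_left_iff (by norm_num : (1:ℝ) < 4)).mpr
          rw [hqe]; linarith
        calc 4 * δ ^ 2 * (4 * R) ^ (1/β) = (4 * 4 ^ (1/β)) * R ^ (1/β) * δ ^ 2 := by
              rw [e6]; ring
          _ ≤ 4 ^ q * R ^ (1/β) * δ ^ 2 := by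
              rw [e7]
              apply mul_le_mul_of_nonneg_right _ (by positivity)
              exact mul_le_mul_of_nonneg_right h8 (Real.rpow_nonneg hR.le _)
      rw [h3]; linarith
    have hfin := (Real.rpow_le_rpow_iff ha0.le (by positivity) hq0).mp hmain
    calc a ≤ 4 * K := hfin
      _ = 4 * R ^ (1 / p) * δ ^ (2 * β / p) := by rw [hK]; ring
  · -- t = 1/2
    have htm : t = 1/2 := min_eq_right hc
    have h1 : a ^ 2 ≤ 8 * δ ^ 2 := by
      have hk := hkey; rw [htm] at hk; nlinarith
    have h2 : a ≤ 3 * δ := by nlinarith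
    have h3 : δ ≤ K := by
      have e1 : δ = δ ^ (2 * β / p) * δ ^ (1 / p) := by
        rw [← Real.rpow_add hδ]
        have he : 2 * β / p + 1 / p = 1 := by field_simp; linarith
        rw [he, Real.rpow_one]
      have e2 : δ ^ (1 / p) ≤ R ^ (1 / p) := Real.rpow_le_rpow hδ.le hδR (by positivity)
      calc δ = δ ^ (2 * β / p) * δ ^ (1 / p) := e1
        _ ≤ δ ^ (2 * β / p) * R ^ (1 / p) :=
            mul_le_mul_of_nonneg_left e2 (Real.rpow_nonneg hδ.le _)
        _ = K := by rw [hK]; ring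
    calc a ≤ 3 * δ := h2
      _ ≤ 3 * K := by linarith
      _ ≤ 4 * K := by linarith
      _ = 4 * R ^ (1 / p) * δ ^ (2 * β / p) := by rw [hK]; ring
end

section
/- Let β ∈ (0,1], R > 0, let q ≥ 0 be a real number, and let n > 0. Then ∫_0^{2R} u^q · exp(− n β (2R)^{−1/β} u^{(β+1)/β} / (β+1)) du ≤ ((β+1)/β)^{(βq−1)/(β+1)} · (2R)^{(q+1)/(β+1)} · Γ(β(q+1)/(β+1)) · n^{−β(q+1)/(β+1)}, where Γ denotes the Gamma function. -/
open MeasureTheory Real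

/-- Bound for ∫_0^{2R} u^q exp(−nβ(2R)^{-1/β}u^{(β+1)/β}/(β+1)) du. -/
theorem integral_rpow_exp_bound (β R q n : ℝ) (hβ0 : 0 < β) (hβ1 : β ≤ 1)
    (hR : 0 < R) (hq : 0 ≤ q) (hn : 0 < n) :
    ∫ u in Set.Icc (0:ℝ) (2 * R),
        u ^ q * Real.exp (-(n * β * (2 * R) ^ (-(1 / β)) * u ^ ((β + 1) / β) / (β + 1))) ≤
      ((β + 1) / β) ^ ((β * q - 1) / (β + 1)) * (2 * R) ^ ((q + 1) / (β + 1)) *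
        Real.Gamma (β * (q + 1) / (β + 1)) * n ^ (-(β * (q + 1)) / (β + 1)) := by
  have h2R : (0:ℝ) < 2 * R := by linarith
  set p : ℝ := (β + 1) / β with hp_def
  set b : ℝ := n * β * (2 * R) ^ (-(1 / β)) / (β + 1) with hb_def
  have hβ1' : (0:ℝ) < β + 1 := by linarith
  have hp1 : (1:ℝ) ≤ p := by
    rw [hp_def, le_div_iff₀ hβ0]; linarith
  have hb : 0 < b := by
    have : (0:ℝ) < (2 * R) ^ (-(1 / β)) := Real.rpow_pos_of_pos h2R _
    positivity
  have hq' : (-1:ℝ) < q := by linarith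
  have hfun : ∀ u : ℝ,
      u ^ q * Real.exp (-(n * β * (2 * R) ^ (-(1 / β)) * u ^ ((β + 1) / β) / (β + 1)))
        = u ^ q * Real.exp (-b * u ^ p) := by
    intro u
    congr 1
    rw [hb_def, hp_def]
    ring_nf
  rw [integral_congr_ae (Filter.Eventually.of_forall hfun)]
  have hInt : IntegrableOn (fun u : ℝ => u ^ q * Real.exp (-b * u ^ p)) (Set.Ioi 0) :=
    integrableOn_rpow_mul_exp_neg_mul_rpow hq' (lt_of_lt_of_le one_pos hp1) hb
  have hmono : ∫ u in Set.Icc (0:ℝ) (2 * R), u ^ q * Real.exp (-b * u ^ p)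
      ≤ ∫ u in Set.Ioi (0:ℝ), u ^ q * Real.exp (-b * u ^ p) := by
    rw [← setIntegral_congr_set (MeasureTheory.Ioc_ae_eq_Icc (a := (0:ℝ)) (b := 2 * R))]
    refine setIntegral_mono_set hInt ?_ ?_
    · filter_upwards [self_mem_ae_restrict (measurableSet_Ioi)] with u hu
      have : (0:ℝ) < u := hu
      positivity
    · exact HasSubset.Subset.eventuallyLE Set.Ioc_subset_Ioi_self
  refine hmono.trans (le_of_eq ?_)
  rw [integral_rpow_mul_exp_neg_mul_rpow (lt_of_lt_of_le one_pos hp1) hq' hb]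
  have hs : (q + 1) / p = β * (q + 1) / (β + 1) := by
    rw [hp_def]; field_simp; try ring
  set s : ℝ := β * (q + 1) / (β + 1) with hs_def
  rw [hs]
  have hsplit : b = (n / ((β + 1) / β)) * (2 * R) ^ (-(1 / β)) := by
    rw [hb_def]; field_simp; try ring
  have hApos : (0:ℝ) < (β + 1) / β := by positivity
  have he : -(q + 1) / p = -s := by rw [neg_div, hs]
  have hexp : (-(1 / β)) * (-s) = (q + 1) / (β + 1) := by
    rw [hs_def]; field_simp; try ring
  have h2 : b ^ (-s) = n ^ (-s) * ((β + 1) / β) ^ s * (2 * R) ^ ((q + 1) / (β + 1)) := by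
    rw [hsplit, Real.mul_rpow (by positivity) (Real.rpow_pos_of_pos h2R _).le,
      Real.div_rpow hn.le hApos.le, ← Real.rpow_mul h2R.le, hexp,
      Real.rpow_neg hApos.le s]
    field_simp
  have h3 : (1:ℝ) / p = ((β + 1) / β) ^ (-1 : ℝ) := by
    rw [Real.rpow_neg_one, hp_def, one_div]
  have h4 : ((β + 1) / β) ^ s * ((β + 1) / β) ^ (-1 : ℝ)
      = ((β + 1) / β) ^ ((β * q - 1) / (β + 1)) := by
    rw [← Real.rpow_add hApos]
    congr 1
    rw [hs_def]; field_simp; try ring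
  rw [he, h2, h3]
  have hns : n ^ (-s) = n ^ (-(β * (q + 1)) / (β + 1)) := by
    congr 1
    rw [hs_def]; ring
  rw [← h4, hns.symm]
  ring
end

section
/- Let β ∈ (0,1] and let p ≥ 1 be a real number. There exists a constant C > 0, depending only on β and p, such that for every R > 0 and every real n ≥ 1, one has ∫_{2R}^∞ u^{2p−2} · exp(−n(u − 2R/(β+1))) du ≤ C · n^{−2p+1} · exp(−βRn/(β+1)). -/
open MeasureTheory Real

/-- Bound on the tail integral ∫_{2R}^∞ u^{2p−2} exp(−n(u − 2R/(β+1))) du. -/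
theorem tail_integral_bound (β p : ℝ) (hβ0 : 0 < β) (hβ1 : β ≤ 1) (hp : 1 ≤ p) :
    ∃ C : ℝ, 0 < C ∧ ∀ R : ℝ, 0 < R → ∀ n : ℝ, 1 ≤ n →
      ∫ u in Set.Ioi (2 * R), u ^ (2 * p - 2) * Real.exp (-(n * (u - 2 * R / (β + 1)))) ≤
        C * n ^ (-(2 * p) + 1) * Real.exp (-(β * R * n / (β + 1))) := by
  have hβ1' : (0:ℝ) < β + 1 := by linarith
  set s : ℝ := 2 * p - 2 with hs_def
  have hs : 0 ≤ s := by simp only [hs_def]; linarith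
  set c : ℝ := β / (2 * (β + 1)) with hc_def
  have hc : 0 < c := by positivity
  set k : ℕ := ⌈s⌉₊ with hk_def
  set M : ℝ := (k.factorial : ℝ) / c ^ k + 1 with hM_def
  have hM : 0 < M := by positivity
  -- sup bound : x^s e^{-cx} ≤ M for x ≥ 0
  have hsup : ∀ x : ℝ, 0 ≤ x → x ^ s * Real.exp (-(c * x)) ≤ M := by
    intro x hx
    have hexple : Real.exp (-(c * x)) ≤ 1 := by
      rw [Real.exp_le_one_iff]; nlinarith
    have h1 : x ^ s ≤ x ^ k + 1 := by
      rcases le_total x 1 with h | h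
      · have : x ^ s ≤ 1 := Real.rpow_le_one hx h hs
        have : (0:ℝ) ≤ x ^ k := pow_nonneg hx k
        linarith [Real.rpow_le_one hx h hs]
      · have h2 : x ^ s ≤ x ^ (k : ℝ) :=
          Real.rpow_le_rpow_of_exponent_le h (Nat.le_ceil s)
        rw [Real.rpow_natCast] at h2
        linarith
    have h2 : x ^ k * Real.exp (-(c * x)) ≤ (k.factorial : ℝ) / c ^ k := by
      have hd := Real.pow_div_factorial_le_exp (c * x) (mul_nonneg hc.le hx) k
      have hfac : (0:ℝ) < (k.factorial : ℝ) := by positivity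
      have hck : (0:ℝ) < c ^ k := by positivity
      have h3 : (c * x) ^ k ≤ (k.factorial : ℝ) * Real.exp (c * x) := by
        rw [div_le_iff₀ hfac] at hd; linarith
      have h4 : x ^ k ≤ (k.factorial : ℝ) / c ^ k * Real.exp (c * x) := by
        rw [mul_pow] at h3
        rw [div_mul_eq_mul_div, le_div_iff₀ hck]
        nlinarith [Real.exp_pos (c * x)]
      calc x ^ k * Real.exp (-(c * x))
          ≤ ((k.factorial : ℝ) / c ^ k * Real.exp (c * x)) * Real.exp (-(c * x)) :=
            mul_le_mul_of_nonneg_right h4 (Real.exp_pos _).le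
        _ = (k.factorial : ℝ) / c ^ k := by
            rw [mul_assoc, ← Real.exp_add]; simp
    calc x ^ s * Real.exp (-(c * x))
        ≤ (x ^ k + 1) * Real.exp (-(c * x)) :=
          mul_le_mul_of_nonneg_right h1 (Real.exp_pos _).le
      _ = x ^ k * Real.exp (-(c * x)) + Real.exp (-(c * x)) := by ring
      _ ≤ (k.factorial : ℝ) / c ^ k + 1 := by linarith
  have hΓ : 0 < Real.Gamma (s + 1) := Real.Gamma_pos_of_pos (by linarith)
  refine ⟨2 ^ s * (Real.Gamma (s + 1) + M), by positivity, ?_⟩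
  intro R hR n hn
  have hn0 : (0:ℝ) < n := by linarith
  -- step A: split the exponential
  have hA : ∀ u : ℝ, u ^ s * Real.exp (-(n * (u - 2 * R / (β + 1))))
      = (u ^ s * Real.exp (-(n * (u - 2 * R)))) * Real.exp (-(2 * β * R * n / (β + 1))) := by
    intro u
    rw [mul_assoc, ← Real.exp_add]
    congr 2
    field_simp
    ring
  simp_rw [hA]
  rw [MeasureTheory.integral_mul_const]
  -- step B: translation
  have hB : (∫ u in Set.Ioi (2 * R), u ^ s * Real.exp (-(n * (u - 2 * R))))
      = ∫ v in Set.Ioi (0:ℝ), (v + 2 * R) ^ s * Real.exp (-(n * v)) := by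
    have h := (measurePreserving_add_right volume (2 * R)).setIntegral_preimage_emb
      (measurableEmbedding_addRight (2 * R))
      (fun u => u ^ s * Real.exp (-(n * (u - 2 * R)))) (Set.Ioi (2 * R))
    rw [← h]
    have hpre : (fun x : ℝ => x + 2 * R) ⁻¹' Set.Ioi (2 * R) = Set.Ioi 0 := by
      rw [Set.preimage_add_const_Ioi]; simp
    rw [hpre]
    refine setIntegral_congr_fun measurableSet_Ioi (fun x _ => ?_)
    simp [add_sub_cancel_right]
  rw [hB]
  -- integrability
  have hint1 : IntegrableOn (fun x : ℝ => x ^ s * Real.exp (-(n * x))) (Set.Ioi 0) := by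
    simpa [Real.rpow_one, neg_mul] using
      integrableOn_rpow_mul_exp_neg_mul_rpow (by linarith : (-1:ℝ) < s) (p := 1) one_pos hn0
  have hint0 : IntegrableOn (fun x : ℝ => Real.exp (-(n * x))) (Set.Ioi 0) := by
    have := integrableOn_rpow_mul_exp_neg_mul_rpow (by norm_num : (-1:ℝ) < 0) (p := 1) one_pos hn0
    simpa [Real.rpow_one, Real.rpow_zero, neg_mul] using this
  have hintg : IntegrableOn
      (fun v : ℝ => 2 ^ s * (v ^ s * Real.exp (-(n * v)))
        + (2 ^ s * (2 * R) ^ s) * Real.exp (-(n * v))) (Set.Ioi 0) :=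
    (hint1.const_mul _).add (hint0.const_mul _)
  -- pointwise bound
  have hkey : ∀ v : ℝ, v ∈ Set.Ioi (0:ℝ) →
      (v + 2 * R) ^ s * Real.exp (-(n * v))
        ≤ 2 ^ s * (v ^ s * Real.exp (-(n * v))) + (2 ^ s * (2 * R) ^ s) * Real.exp (-(n * v)) := by
    intro v hv
    have hv0 : 0 < v := hv
    have hmax : v + 2 * R ≤ 2 * max v (2 * R) := by
      have := le_max_left v (2 * R); have := le_max_right v (2 * R); linarith
    have hmax0 : (0:ℝ) ≤ max v (2 * R) := le_trans hv0.le (le_max_left _ _)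
    have h1 : (v + 2 * R) ^ s ≤ 2 ^ s * (v ^ s + (2 * R) ^ s) := by
      calc (v + 2 * R) ^ s ≤ (2 * max v (2 * R)) ^ s :=
            Real.rpow_le_rpow (by positivity) hmax hs
        _ = 2 ^ s * (max v (2 * R)) ^ s := Real.mul_rpow (by norm_num) hmax0
        _ ≤ 2 ^ s * (v ^ s + (2 * R) ^ s) := by
            refine mul_le_mul_of_nonneg_left ?_ (by positivity)
            rcases le_total v (2 * R) with h | h
            · rw [max_eq_right h]
              exact le_add_of_nonneg_left (Real.rpow_nonneg hv0.le _)
            · rw [max_eq_left h]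
              exact le_add_of_nonneg_right (Real.rpow_nonneg (by positivity) _)
    calc (v + 2 * R) ^ s * Real.exp (-(n * v))
        ≤ (2 ^ s * (v ^ s + (2 * R) ^ s)) * Real.exp (-(n * v)) :=
          mul_le_mul_of_nonneg_right h1 (Real.exp_pos _).le
      _ = 2 ^ s * (v ^ s * Real.exp (-(n * v))) + (2 ^ s * (2 * R) ^ s) * Real.exp (-(n * v)) := by
          ring
  have hintf : IntegrableOn (fun v : ℝ => (v + 2 * R) ^ s * Real.exp (-(n * v))) (Set.Ioi 0) := by
    refine hintg.mono' ?_ ?_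
    · refine ContinuousOn.aestronglyMeasurable ?_ measurableSet_Ioi
      refine ContinuousOn.mul ?_ ?_
      · exact ((continuous_id.add continuous_const).rpow_const
          (fun x => Or.inr hs)).continuousOn
      · exact (Real.continuous_exp.comp (continuous_const.mul continuous_id).neg).continuousOn
    · refine Filter.eventually_of_mem (self_mem_ae_restrict measurableSet_Ioi) (fun v hv => ?_)
      have hv0 : (0:ℝ) < v := hv
      rw [Real.norm_eq_abs, abs_of_nonneg (by positivity)]
      exact hkey v hv
  -- compute integrals
  have hI1 : (∫ v in Set.Ioi (0:ℝ), v ^ s * Real.exp (-(n * v)))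
      = (1 / n) ^ (s + 1) * Real.Gamma (s + 1) := by
    have := Real.integral_rpow_mul_exp_neg_mul_Ioi (a := s + 1) (by linarith) hn0
    simpa [add_sub_cancel_right] using this
  have hI0 : (∫ v in Set.Ioi (0:ℝ), Real.exp (-(n * v))) = 1 / n := by
    have := Real.integral_rpow_mul_exp_neg_mul_Ioi (a := 1) one_pos hn0
    simpa [Real.rpow_one, Real.rpow_zero, Real.Gamma_one] using this
  have hJ : (∫ v in Set.Ioi (0:ℝ), (v + 2 * R) ^ s * Real.exp (-(n * v)))
      ≤ 2 ^ s * ((1 / n) ^ (s + 1) * Real.Gamma (s + 1)) + (2 ^ s * (2 * R) ^ s) * (1 / n) := by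
    calc (∫ v in Set.Ioi (0:ℝ), (v + 2 * R) ^ s * Real.exp (-(n * v)))
        ≤ ∫ v in Set.Ioi (0:ℝ), (2 ^ s * (v ^ s * Real.exp (-(n * v)))
            + (2 ^ s * (2 * R) ^ s) * Real.exp (-(n * v))) :=
          setIntegral_mono_on hintf hintg measurableSet_Ioi hkey
      _ = 2 ^ s * ((1 / n) ^ (s + 1) * Real.Gamma (s + 1)) + (2 ^ s * (2 * R) ^ s) * (1 / n) := by
          rw [MeasureTheory.integral_add (hint1.const_mul _) (hint0.const_mul _),
            MeasureTheory.integral_const_mul, MeasureTheory.integral_const_mul, hI1, hI0]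
  -- final arithmetic
  set E : ℝ := Real.exp (-(β * R * n / (β + 1))) with hE_def
  have hE0 : 0 < E := Real.exp_pos _
  have hE1 : E ≤ 1 := by
    rw [hE_def, Real.exp_le_one_iff]
    have : 0 ≤ β * R * n / (β + 1) := by positivity
    linarith
  have hEE : Real.exp (-(2 * β * R * n / (β + 1))) = E * E := by
    rw [hE_def, ← Real.exp_add]
    congr 1
    field_simp
    ring
  set N : ℝ := n ^ (-(s + 1)) with hN_def
  have hN0 : 0 < N := Real.rpow_pos_of_pos hn0 _
  have hNeq : (1 / n) ^ (s + 1) = N := by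
    rw [hN_def, one_div, Real.inv_rpow hn0.le, ← Real.rpow_neg hn0.le]
  have hexp_eq : n ^ (-(2 * p) + 1) = N := by
    rw [hN_def]
    congr 1
    simp only [hs_def]
    ring
  -- the crucial R-absorbing bound
  have habs : (2 * R) ^ s * (1 / n) * E ≤ M * N := by
    have hx : (0:ℝ) ≤ 2 * R * n := by positivity
    have h1 : E = Real.exp (-(c * (2 * R * n))) := by
      rw [hE_def, hc_def]
      congr 1
      field_simp
    have h2 : (2 * R * n) ^ s * Real.exp (-(c * (2 * R * n))) ≤ M := hsup _ hx
    have h3 : (2 * R) ^ s = (2 * R * n) ^ s * n ^ (-s) := by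
      rw [Real.mul_rpow (by positivity) hn0.le, mul_assoc, ← Real.rpow_add hn0]
      simp
    have h4 : n ^ (-s) * (1 / n) = N := by
      rw [hN_def, one_div, ← Real.rpow_neg_one n, ← Real.rpow_add hn0]
      ring_nf
    calc (2 * R) ^ s * (1 / n) * E
        = ((2 * R * n) ^ s * Real.exp (-(c * (2 * R * n)))) * (n ^ (-s) * (1 / n)) := by
          rw [h3, h1]; ring
      _ ≤ M * (n ^ (-s) * (1 / n)) := by
          refine mul_le_mul_of_nonneg_right h2 ?_
          positivity
      _ = M * N := by rw [h4]
  rw [hexp_eq, hEE]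
  have hfinal : (2 ^ s * ((1 / n) ^ (s + 1) * Real.Gamma (s + 1))
        + (2 ^ s * (2 * R) ^ s) * (1 / n)) * (E * E)
      ≤ 2 ^ s * (Real.Gamma (s + 1) + M) * N * E := by
    rw [hNeq]
    have h2s : (0:ℝ) < 2 ^ s := Real.rpow_pos_of_pos (by norm_num) s
    have ht1 : 2 ^ s * (N * Real.Gamma (s + 1)) * (E * E)
        ≤ 2 ^ s * Real.Gamma (s + 1) * N * E := by
      have heq : 2 ^ s * (N * Real.Gamma (s + 1)) * (E * E)
          = (2 ^ s * Real.Gamma (s + 1) * N * E) * E := by ring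
      rw [heq]
      exact mul_le_of_le_one_right (by positivity) hE1
    have ht2 : (2 ^ s * (2 * R) ^ s) * (1 / n) * (E * E) ≤ 2 ^ s * M * N * E := by
      have heq : (2 ^ s * (2 * R) ^ s) * (1 / n) * (E * E)
          = 2 ^ s * ((2 * R) ^ s * (1 / n) * E) * E := by ring
      rw [heq]
      have h6 : 2 ^ s * ((2 * R) ^ s * (1 / n) * E) ≤ 2 ^ s * (M * N) :=
        mul_le_mul_of_nonneg_left habs h2s.le
      calc 2 ^ s * ((2 * R) ^ s * (1 / n) * E) * E
          ≤ 2 ^ s * (M * N) * E := mul_le_mul_of_nonneg_right h6 hE0.le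
        _ = 2 ^ s * M * N * E := by ring
    calc (2 ^ s * (N * Real.Gamma (s + 1)) + (2 ^ s * (2 * R) ^ s) * (1 / n)) * (E * E)
        = 2 ^ s * (N * Real.Gamma (s + 1)) * (E * E)
          + (2 ^ s * (2 * R) ^ s) * (1 / n) * (E * E) := by ring
      _ ≤ 2 ^ s * Real.Gamma (s + 1) * N * E + 2 ^ s * M * N * E := add_le_add ht1 ht2
      _ = 2 ^ s * (Real.Gamma (s + 1) + M) * N * E := by ring
  calc (∫ v in Set.Ioi (0:ℝ), (v + 2 * R) ^ s * Real.exp (-(n * v))) * (E * E)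
      ≤ (2 ^ s * ((1 / n) ^ (s + 1) * Real.Gamma (s + 1))
          + (2 ^ s * (2 * R) ^ s) * (1 / n)) * (E * E) := by
        refine mul_le_mul_of_nonneg_right hJ ?_
        positivity
    _ ≤ 2 ^ s * (Real.Gamma (s + 1) + M) * N * E := hfinal
end

section
/- Let K : ℝ → ℝ be the triangular kernel K(u) = 4·min(u, 1−u) for u ∈ [0,1] and K(u) = 0 otherwise. Let β ∈ (0,1], h > 0 and x_0 ∈ ℝ, and define f : ℝ → ℝ by f(x) = h^β · K((x − x_0)/h). Then |f(x) − f(y)| ≤ 4|x − y|^β for all x, y ∈ ℝ. -/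
/-- The triangular kernel K(u) = 4(u ∧ (1−u))·1_{[0,1]}(u). -/
noncomputable def triKernel (u : ℝ) : ℝ :=
  if u ∈ Set.Icc (0:ℝ) 1 then 4 * min u (1 - u) else 0

lemma triKernel_eq (u : ℝ) : triKernel u = 4 * max 0 (min u (1 - u)) := by
  unfold triKernel
  rcases le_or_gt 0 u with h0 | h0
  · rcases le_or_gt u 1 with h1 | h1
    · rw [if_pos ⟨h0, h1⟩, max_eq_right (le_min h0 (by linarith))]
    · rw [if_neg (by simp [Set.mem_Icc]; intro; linarith),
        max_eq_left (by simp [min_le_iff]; right; linarith), mul_zero]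
  · rw [if_neg (by simp [Set.mem_Icc]; intro; linarith),
      max_eq_left (by simp [min_le_iff]; left; linarith), mul_zero]

lemma triKernel_lip (u v : ℝ) : |triKernel u - triKernel v| ≤ 4 * |u - v| := by
  rw [triKernel_eq, triKernel_eq, ← mul_sub, abs_mul, abs_of_nonneg (by norm_num : (0:ℝ) ≤ 4)]
  refine mul_le_mul_of_nonneg_left ?_ (by norm_num)
  calc |max 0 (min u (1 - u)) - max 0 (min v (1 - v))|
      ≤ max |0 - 0| |min u (1 - u) - min v (1 - v)| := abs_max_sub_max_le_max _ _ _ _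
    _ ≤ |u - v| := by
        apply max_le (by simp [abs_nonneg])
        calc |min u (1 - u) - min v (1 - v)| ≤ max |u - v| |(1 - u) - (1 - v)| :=
              abs_min_sub_min_le_max _ _ _ _
          _ ≤ |u - v| := by
              apply max_le le_rfl
              rw [show (1 - u) - (1 - v) = -(u - v) by ring, abs_neg]

lemma triKernel_nonneg (u : ℝ) : 0 ≤ triKernel u := by
  rw [triKernel_eq]; positivity

lemma triKernel_le_two (u : ℝ) : triKernel u ≤ 2 := by
  rw [triKernel_eq]
  rcases le_or_gt (min u (1 - u)) 0 with h | h
  · rw [max_eq_left h]; norm_num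
  · rw [max_eq_right h.le]
    nlinarith [min_le_left u (1 - u), min_le_right u (1 - u)]

/-- The rescaled triangular bump x ↦ h^β K((x−x₀)/h) is β-Hölder with constant 4. -/
theorem triangular_bump_holder (β h x₀ : ℝ) (hβ0 : 0 < β) (hβ1 : β ≤ 1) (hh : 0 < h) :
    ∀ x y : ℝ,
      |h ^ β * triKernel ((x - x₀) / h) - h ^ β * triKernel ((y - x₀) / h)| ≤
        4 * |x - y| ^ β := by
  intro x y
  have hhb : (0:ℝ) < h ^ β := Real.rpow_pos_of_pos hh β
  set t := |x - y| with ht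
  have htn : 0 ≤ t := abs_nonneg _
  rcases eq_or_lt_of_le htn with h0 | h0
  · have hxy : x = y := by
      have := abs_eq_zero.mp h0.symm
      linarith [sub_eq_zero.mp this]
    simp [hxy, Real.rpow_nonneg htn]
  rcases le_or_gt t h with hle | hle
  · -- Lipschitz case
    have key : |h ^ β * triKernel ((x - x₀) / h) - h ^ β * triKernel ((y - x₀) / h)|
        ≤ h ^ β * (4 * (t / h)) := by
      rw [← mul_sub, abs_mul, abs_of_pos hhb]
      gcongr
      have := triKernel_lip ((x - x₀) / h) ((y - x₀) / h)
      calc |triKernel ((x - x₀) / h) - triKernel ((y - x₀) / h)|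
          ≤ 4 * |(x - x₀) / h - (y - x₀) / h| := this
        _ = 4 * (t / h) := by
            rw [div_sub_div_same, show x - x₀ - (y - x₀) = x - y by ring,
              abs_div, abs_of_pos hh]
    refine key.trans ?_
    have hdiv0 : 0 < t / h := div_pos h0 hh
    have hdiv1 : t / h ≤ 1 := (div_le_one hh).mpr hle
    have h1 : t / h ≤ (t / h) ^ β := by
      calc t / h = (t / h) ^ (1:ℝ) := (Real.rpow_one _).symm
        _ ≤ (t / h) ^ β := Real.rpow_le_rpow_of_exponent_ge hdiv0 hdiv1 hβ1
    calc h ^ β * (4 * (t / h)) ≤ h ^ β * (4 * (t / h) ^ β) := by gcongr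
      _ = 4 * (h ^ β * (t / h) ^ β) := by ring
      _ = 4 * t ^ β := by
          rw [← Real.mul_rpow hh.le hdiv0.le, mul_div_cancel₀ _ hh.ne']
  · -- bounded case
    have key : |h ^ β * triKernel ((x - x₀) / h) - h ^ β * triKernel ((y - x₀) / h)|
        ≤ 4 * h ^ β := by
      have b1 := triKernel_le_two ((x - x₀) / h)
      have b2 := triKernel_le_two ((y - x₀) / h)
      have n1 := triKernel_nonneg ((x - x₀) / h)
      have n2 := triKernel_nonneg ((y - x₀) / h)
      rw [abs_sub_le_iff]
      constructor <;> nlinarith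
    refine key.trans ?_
    gcongr
end

section
/- Let m ≥ 1 be an integer and let a_1, …, a_m be nonnegative reals, not all zero. Write ‖a‖_r = (Σ_{k=1}^m a_k^r)^{1/r} for r ∈ {1, 2, 3}. Let θ_1, …, θ_m be independent random variables on a probability space, each taking values in {0,1}, with P(θ_k = 1) = a_k/‖a‖_2 for every k (note a_k/‖a‖_2 ∈ [0,1]). Then P(Σ_{k=1}^m a_k θ_k < ‖a‖_2/2) ≤ 4 · (‖a‖_3/‖a‖_2)^3. -/
open MeasureTheory ProbabilityTheory

/-- Deviation bound for a weighted sum of independent Bernoulli variables with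
success probabilities a_k/‖a‖₂. -/
theorem weighted_bernoulli_deviation (m : ℕ) (hm : 1 ≤ m) (a : Fin m → ℝ)
    (ha : ∀ k, 0 ≤ a k) (ha' : ∃ k, a k ≠ 0)
    {Ω : Type*} [MeasurableSpace Ω] (P : Measure Ω) [IsProbabilityMeasure P]
    (θ : Fin m → Ω → ℝ) (hmeas : ∀ k, Measurable (θ k))
    (hind : iIndepFun θ P)
    (hval : ∀ k, ∀ ω, θ k ω = 0 ∨ θ k ω = 1)
    (hprob : ∀ k, P {ω | θ k ω = 1} =
      ENNReal.ofReal (a k / (∑ i, (a i) ^ 2) ^ ((1:ℝ)/2))) :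
    P {ω | ∑ k, a k * θ k ω < (∑ i, (a i) ^ 2) ^ ((1:ℝ)/2) / 2} ≤
      ENNReal.ofReal
        (4 * ((∑ i, (a i) ^ 3) ^ ((1:ℝ)/3) / (∑ i, (a i) ^ 2) ^ ((1:ℝ)/2)) ^ 3) := by
  classical
  set b : ℝ := (∑ i, (a i) ^ 2) ^ ((1:ℝ)/2) with hbdef
  have hsum2 : 0 < ∑ i, (a i) ^ 2 := by
    obtain ⟨k, hk⟩ := ha'
    exact Finset.sum_pos' (fun i _ => sq_nonneg _)
      ⟨k, Finset.mem_univ k, pow_pos ((ha k).lt_of_ne (Ne.symm hk)) 2⟩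
  have hb : 0 < b := Real.rpow_pos_of_pos hsum2 _
  have hb2 : b ^ 2 = ∑ i, (a i) ^ 2 := by
    rw [hbdef, ← Real.rpow_natCast _ 2, ← Real.rpow_mul hsum2.le]
    norm_num
  have hsum3 : 0 ≤ ∑ i, (a i) ^ 3 := Finset.sum_nonneg fun i _ => pow_nonneg (ha i) 3
  have hc3 : ((∑ i, (a i) ^ 3) ^ ((1:ℝ)/3)) ^ 3 = ∑ i, (a i) ^ 3 := by
    rw [← Real.rpow_natCast _ 3, ← Real.rpow_mul hsum3]
    norm_num
  have hA : ∀ k, MeasurableSet {ω | θ k ω = 1} :=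
    fun k => (hmeas k) (measurableSet_singleton 1)
  have hθmem : ∀ k, MemLp (θ k) 2 P := fun k =>
    memLp_of_bounded (a := 0) (b := 1)
      (Filter.Eventually.of_forall fun ω => by
        rcases hval k ω with h | h <;> simp [h, Set.mem_Icc])
      (hmeas k).aestronglyMeasurable 2
  have hEθ : ∀ k, ∫ ω, θ k ω ∂P = a k / b := by
    intro k
    have hrepr : ∀ ω, θ k ω = Set.indicator {ω | θ k ω = 1} (fun _ => (1:ℝ)) ω := by
      intro ω
      rcases hval k ω with h | h
      · rw [h, Set.indicator_of_notMem (by simp [Set.mem_setOf_eq, h])]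
      · rw [h, Set.indicator_of_mem (by exact h)]
    calc ∫ ω, θ k ω ∂P
        = ∫ ω, Set.indicator {ω | θ k ω = 1} (fun _ => (1:ℝ)) ω ∂P := by
          exact integral_congr_ae (Filter.Eventually.of_forall hrepr)
      _ = (P {ω | θ k ω = 1}).toReal • (1:ℝ) := integral_indicator_const _ (hA k)
      _ = a k / b := by
          rw [smul_eq_mul, mul_one, hprob k, ENNReal.toReal_ofReal (div_nonneg (ha k) hb.le)]
  have hθsq : ∀ k, (θ k) ^ 2 = θ k := by
    intro k
    funext ω
    rcases hval k ω with h | h <;> simp [h]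
  have hvarθ : ∀ k, variance (θ k) P ≤ a k / b := by
    intro k
    rw [variance_eq_sub (hθmem k)]
    have h1 : P[(θ k) ^ 2] = a k / b := by rw [hθsq k]; exact hEθ k
    have h2 : P[θ k] = a k / b := hEθ k
    rw [h1, h2]
    nlinarith [sq_nonneg (a k / b)]
  -- the summands
  set X : Fin m → Ω → ℝ := fun k ω => a k * θ k ω with hXdef
  have hXmem : ∀ k, MemLp (X k) 2 P := fun k => (hθmem k).const_mul (a k)
  have hSfun : (fun ω => ∑ k, a k * θ k ω) = ∑ k, X k := by
    funext ω
    simp [hXdef, Finset.sum_apply]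
  have hmemS : MemLp (∑ k, X k) 2 P :=
    memLp_finset_sum' _ fun k _ => hXmem k
  -- mean of the sum
  have hES : ∫ ω, (∑ k, X k) ω ∂P = b := by
    have : ∫ ω, (∑ k, X k) ω ∂P = ∑ k, ∫ ω, X k ω ∂P := by
      simp_rw [Finset.sum_apply]
      exact integral_finset_sum _ fun k _ =>
        ((hθmem k).integrable one_le_two).const_mul (a k)
    rw [this]
    have : ∀ k ∈ Finset.univ, ∫ ω, X k ω ∂P = a k ^ 2 / b := by
      intro k _
      rw [hXdef]
      simp only
      rw [integral_const_mul, hEθ k]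
      ring
    rw [Finset.sum_congr rfl this, ← Finset.sum_div, ← hb2]
    field_simp
  -- variance of the sum
  have hpair : Set.Pairwise ↑(Finset.univ : Finset (Fin m))
      fun i j => IndepFun (X i) (X j) P := by
    intro i _ j _ hij
    exact (hind.indepFun hij).comp (measurable_const_mul (a i)) (measurable_const_mul (a j))
  have hvarS : variance (∑ k, X k) P ≤ (∑ i, (a i) ^ 3) / b := by
    rw [IndepFun.variance_sum (fun k _ => hXmem k) hpair]
    calc ∑ k, variance (X k) P
        ≤ ∑ k, (a k) ^ 3 / b := by
          apply Finset.sum_le_sum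
          intro k _
          have : variance (X k) P = (a k) ^ 2 * variance (θ k) P := by
            rw [hXdef]; exact variance_const_mul (a k) (θ k) P
          rw [this]
          calc (a k) ^ 2 * variance (θ k) P ≤ (a k) ^ 2 * (a k / b) :=
                mul_le_mul_of_nonneg_left (hvarθ k) (sq_nonneg _)
            _ = (a k) ^ 3 / b := by ring
      _ = (∑ i, (a i) ^ 3) / b := by rw [Finset.sum_div]
  -- Chebyshev
  have hcheb := meas_ge_le_variance_div_sq (μ := P) hmemS
    (show (0:ℝ) < b / 2 by linarith)
  have hsub : {ω | ∑ k, a k * θ k ω < b / 2} ⊆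
      {ω | b / 2 ≤ |(∑ k, X k) ω - P[∑ k, X k]|} := by
    intro ω hω
    simp only [Set.mem_setOf_eq] at hω ⊢
    have hSω : (∑ k, X k) ω = ∑ k, a k * θ k ω := by rw [← hSfun]
    rw [hES, hSω, abs_sub_comm, abs_of_nonneg (by linarith)]
    linarith
  calc P {ω | ∑ k, a k * θ k ω < b / 2}
      ≤ P {ω | b / 2 ≤ |(∑ k, X k) ω - P[∑ k, X k]|} := measure_mono hsub
    _ ≤ ENNReal.ofReal (variance (∑ k, X k) P / (b / 2) ^ 2) := hcheb
    _ ≤ ENNReal.ofReal (4 * ((∑ i, (a i) ^ 3) ^ ((1:ℝ)/3) / b) ^ 3) := by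
        apply ENNReal.ofReal_le_ofReal
        have h1 : variance (∑ k, X k) P / (b / 2) ^ 2 ≤
            ((∑ i, (a i) ^ 3) / b) / (b / 2) ^ 2 := by
          gcongr
        have h2 : ((∑ i, (a i) ^ 3) / b) / (b / 2) ^ 2 =
            4 * ((∑ i, (a i) ^ 3) ^ ((1:ℝ)/3) / b) ^ 3 := by
          have e : ((∑ i, (a i) ^ 3) ^ ((1:ℝ)/3) / b) ^ 3 =
              (∑ i, (a i) ^ 3) / b ^ 3 := by rw [div_pow, hc3]
          rw [e]
          field_simp
          ring
        linarith
end

section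
/- Let (Ω, 𝔽, P) be a probability space, let p ≥ 1 be a real number, let t ≥ 0, and let X : Ω → [0,∞) be a random variable with E[(X − t^p)^2] < ∞. Then E[|X^{1/p} − t|] ≤ (E[(X − t^p)^2])^{1/(2p)} + 2t. -/
open MeasureTheory

lemma real_rpow_add_le {a b q : ℝ} (ha : 0 ≤ a) (hb : 0 ≤ b) (hq : 0 ≤ q) (hq1 : q ≤ 1) :
    (a + b) ^ q ≤ a ^ q + b ^ q := by
  have := NNReal.rpow_add_le_add_rpow (a.toNNReal) (b.toNNReal) hq hq1
  have h := NNReal.coe_le_coe.2 this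
  rw [NNReal.coe_add, NNReal.coe_rpow, NNReal.coe_rpow, NNReal.coe_rpow, NNReal.coe_add,
    Real.coe_toNNReal _ ha, Real.coe_toNNReal _ hb] at h
  exact h

/-- Crude bound: E|X^{1/p} − t| ≤ (E(X − t^p)²)^{1/(2p)} + 2t. -/
theorem root_estimate_crude {Ω : Type*} [MeasurableSpace Ω] (P : Measure Ω)
    [IsProbabilityMeasure P] (p t : ℝ) (hp : 1 ≤ p) (ht : 0 ≤ t)
    (X : Ω → ℝ) (hX : ∀ ω, 0 ≤ X ω) (hXmeas : Measurable X)
    (hXint : Integrable (fun ω => (X ω - t ^ p) ^ 2) P) :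
    (∫ ω, |X ω ^ (1/p) - t| ∂P) ≤
      (∫ ω, (X ω - t ^ p) ^ 2 ∂P) ^ (1 / (2 * p)) + 2 * t := by
  have hp0 : (0:ℝ) < p := lt_of_lt_of_le one_pos hp
  set Y : Ω → ℝ := fun ω => X ω - t ^ p with hY
  have hq0 : (0:ℝ) ≤ 1/(2*p) := by positivity
  have hq1 : 1/(2*p) ≤ 1 := by
    rw [div_le_one (by linarith)]; linarith
  have key : ∀ ω, |Y ω| ^ (1/p) = (Y ω ^ 2) ^ (1/(2*p)) := by
    intro ω
    rw [← sq_abs, ← Real.rpow_natCast |Y ω| 2, ← Real.rpow_mul (abs_nonneg _)]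
    norm_num
    congr 1
    field_simp
  have ptwise : ∀ ω, |X ω ^ (1/p) - t| ≤ (Y ω ^ 2) ^ (1/(2*p)) + 2 * t := by
    intro ω
    have h1 : X ω ≤ |Y ω| + t ^ p := by
      have := le_abs_self (Y ω)
      simp only [hY] at this ⊢
      linarith
    have h2 : X ω ^ (1/p) ≤ (|Y ω| + t ^ p) ^ (1/p) :=
      Real.rpow_le_rpow (hX ω) h1 (by positivity)
    have h3 : (|Y ω| + t ^ p) ^ (1/p) ≤ |Y ω| ^ (1/p) + (t ^ p) ^ (1/p) :=
      real_rpow_add_le (abs_nonneg _) (Real.rpow_nonneg ht p) (by positivity)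
        (by rw [div_le_one hp0]; linarith)
    have h4 : (t ^ p) ^ (1/p) = t := by
      rw [← Real.rpow_mul ht, mul_one_div, div_self hp0.ne', Real.rpow_one]
    have hx := Real.rpow_nonneg (hX ω) (1/p)
    have h5 : |X ω ^ (1/p) - t| ≤ X ω ^ (1/p) + t := by
      rw [abs_sub_le_iff]; constructor <;> nlinarith
    rw [h4] at h3
    calc |X ω ^ (1/p) - t| ≤ X ω ^ (1/p) + t := h5
      _ ≤ |Y ω| ^ (1/p) + t + t := by linarith [h2.trans h3]
      _ = (Y ω ^ 2) ^ (1/(2*p)) + 2 * t := by rw [key ω]; ring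
  have hYmeas : Measurable Y := hXmeas.sub measurable_const
  have hint_g : Integrable (fun ω => (Y ω ^ 2) ^ (1/(2*p))) P := by
    refine Integrable.mono' ((integrable_const (1:ℝ)).add hXint) ?_ ?_
    · exact (by fun_prop : Measurable fun ω => (Y ω ^ 2) ^ (1/(2*p))).aestronglyMeasurable
    · filter_upwards with ω
      simp only [Pi.add_apply]
      rw [Real.norm_of_nonneg (Real.rpow_nonneg (sq_nonneg _) _)]
      rcases le_or_gt (Y ω ^ 2) 1 with h | h
      · have : (Y ω ^ 2) ^ (1/(2*p)) ≤ 1 := Real.rpow_le_one (sq_nonneg _) h hq0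
        nlinarith [sq_nonneg (Y ω)]
      · have : (Y ω ^ 2) ^ (1/(2*p)) ≤ (Y ω ^ 2) ^ (1:ℝ) :=
          Real.rpow_le_rpow_of_exponent_le h.le hq1
        rw [Real.rpow_one] at this
        linarith
  have jensen : (∫ ω, (Y ω ^ 2) ^ (1/(2*p)) ∂P) ≤ (∫ ω, Y ω ^ 2 ∂P) ^ (1/(2*p)) := by
    refine ConcaveOn.le_map_integral (Real.concaveOn_rpow hq0 hq1) ?_ isClosed_Ici ?_ hXint hint_g
    · intro x _
      exact (Real.continuousAt_rpow_const x _ (Or.inr hq0)).continuousWithinAt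
    · filter_upwards with ω
      exact sq_nonneg (Y ω)
  have hint_rhs : Integrable (fun ω => (Y ω ^ 2) ^ (1/(2*p)) + 2 * t) P :=
    hint_g.add (integrable_const _)
  calc (∫ ω, |X ω ^ (1/p) - t| ∂P)
      ≤ ∫ ω, ((Y ω ^ 2) ^ (1/(2*p)) + 2 * t) ∂P := by
        refine integral_mono_of_nonneg ?_ hint_rhs ?_
        · filter_upwards with ω; exact abs_nonneg _
        · filter_upwards with ω; exact ptwise ω
    _ = (∫ ω, (Y ω ^ 2) ^ (1/(2*p)) ∂P) + 2 * t := by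
        rw [integral_add hint_g (integrable_const _), integral_const]
        simp
    _ ≤ (∫ ω, (X ω - t ^ p) ^ 2 ∂P) ^ (1 / (2 * p)) + 2 * t := by
        exact add_le_add_left jensen _
end
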